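/- arXiv:1203.2660 — 4 statements merged into one kernel-verified Lean document; each statement's English description precedes it below -/
import Mathlib

section
/- Let n ≥ 13 be an integer and let B be a Steiner triple system of order n: a family of 3-element subsets (blocks) of {1,...,n} such that every pair of distinct elements of {1,...,n} is contained in exactly one block. Then B is a resolving set for the Kneser graph K(n,3), and consequently β(K(n,3)) ≤ n(n−1)/6. -/
/-- The Johnson graph `J(n,k)`: vertices are the `k`-element subsets of `{1,...,n}`,
two vertices adjacent iff their intersection has `k-1` elements. -/
def johnsonGraph (n k : ℕ) : SimpleGraph {s : Finset (Fin n) // s.card = k} where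
  Adj U W := U ≠ W ∧ (U.1 ∩ W.1).card = k - 1
  symm := by
    constructor
    intro U W h
    exact ⟨h.1.symm, by rw [Finset.inter_comm]; exact h.2⟩
  loopless := by
    constructor
    intro U h
    exact h.1 rfl

/-- The Kneser graph `K(n,k)`: vertices are the `k`-element subsets of `{1,...,n}`,
two vertices adjacent iff the corresponding subsets are disjoint. -/
def kneserGraph (n k : ℕ) : SimpleGraph {s : Finset (Fin n) // s.card = k} where
  Adj U W := U ≠ W ∧ Disjoint U.1 W.1
  symm := by
    constructor
    intro U W h
    exact ⟨h.1.symm, h.2.symm⟩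
  loopless := by
    constructor
    intro U h
    exact h.1 rfl

/-- A set `S` of vertices is a resolving set for `G` if every pair of distinct
vertices is resolved by some vertex of `S`, i.e. is at different distances from it. -/
def resolvingSet {V : Type*} (G : SimpleGraph V) (S : Set V) : Prop :=
  ∀ u v : V, u ≠ v → ∃ x ∈ S, G.dist u x ≠ G.dist v x

/-- The metric dimension `β(G)`: the minimum cardinality of a resolving set for `G`. -/
noncomputable def metricDim {V : Type*} (G : SimpleGraph V) : ℕ :=
  sInf {m | ∃ S : Finset V, resolvingSet G ↑S ∧ S.card = m}

/-- For `n ≥ 13`, the blocks of a Steiner triple system of order `n` form a resolving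
set for the Kneser graph `K(n,3)`; consequently `β(K(n,3)) ≤ n(n−1)/6`. -/
theorem steiner_triple_system_resolving_kneser (n : ℕ) (hn : 13 ≤ n)
    (B : Finset (Finset (Fin n)))
    (hcard : ∀ b ∈ B, b.card = 3)
    (hsteiner : ∀ p q : Fin n, p ≠ q → ∃! b, b ∈ B ∧ p ∈ b ∧ q ∈ b) :
    resolvingSet (kneserGraph n 3) {X | X.1 ∈ B} ∧
    metricDim (kneserGraph n 3) ≤ n * (n - 1) / 6 := by
  have hres : resolvingSet (kneserGraph n 3) {X | X.1 ∈ B} := by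
    intro U W hUW
    have hx : ∃ x ∈ U.1, x ∉ W.1 := by
      by_contra h
      push_neg at h
      have : U.1 = W.1 := Finset.eq_of_subset_of_card_le h (by rw [U.2, W.2])
      exact hUW (Subtype.ext this)
    obtain ⟨x, hxU, hxW⟩ := hx
    set f : Fin n → Finset (Fin n) := fun w =>
      if h : x = w then ∅ else (hsteiner x w h).choose with hf
    set bad : Finset (Fin n) := W.1 ∪ W.1.biUnion f with hbad
    have hfcard : ∀ w, (f w).card ≤ 3 := by
      intro w
      rw [hf]
      by_cases h : x = w
      · simp [h]
      · simp only [dif_neg h]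
        exact le_of_eq (hcard _ (hsteiner x w h).choose_spec.1.1)
    have hbadcard : bad.card ≤ 12 := by
      calc bad.card ≤ W.1.card + (W.1.biUnion f).card := Finset.card_union_le _ _
        _ ≤ W.1.card + ∑ w ∈ W.1, (f w).card := by
            gcongr; exact Finset.card_biUnion_le
        _ ≤ 3 + 3 * 3 := by
            rw [W.2]
            gcongr
            calc ∑ w ∈ W.1, (f w).card ≤ ∑ w ∈ W.1, 3 :=
                  Finset.sum_le_sum (fun w _ => hfcard w)
              _ = 3 * 3 := by rw [Finset.sum_const, W.2]; ring
        _ ≤ 12 := by norm_num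
    have hz : ∃ z, z ∉ bad := by
      by_contra h
      push_neg at h
      have hsub : (Finset.univ : Finset (Fin n)) ⊆ bad := fun z _ => h z
      have := Finset.card_le_card hsub
      rw [Finset.card_univ, Fintype.card_fin] at this
      omega
    obtain ⟨z, hz⟩ := hz
    have hzW : z ∉ W.1 := fun h => hz (Finset.mem_union_left _ h)
    have hzf : ∀ w ∈ W.1, z ∉ f w := by
      intro w hw hzfw
      exact hz (Finset.mem_union_right _ (Finset.mem_biUnion.2 ⟨w, hw, hzfw⟩))
    have hWne : W.1.Nonempty := Finset.card_pos.1 (by rw [W.2]; norm_num)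
    have hxz : x ≠ z := by
      rintro rfl
      obtain ⟨w, hw⟩ := hWne
      have hxw : x ≠ w := fun h => hxW (h ▸ hw)
      apply hzf w hw
      rw [hf]
      simp only [dif_neg hxw]
      exact (hsteiner x w hxw).choose_spec.1.2.1
    obtain ⟨⟨hbB, hxb, hzb⟩, -⟩ := (hsteiner x z hxz).choose_spec
    set b := (hsteiner x z hxz).choose with hbdef
    have hdisj : Disjoint b W.1 := by
      rw [Finset.disjoint_left]
      intro w hwb hwW
      have hxw : x ≠ w := fun h => hxW (h ▸ hwW)
      have heq : b = (hsteiner x w hxw).choose :=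
        (hsteiner x w hxw).unique ⟨hbB, hxb, hwb⟩ (hsteiner x w hxw).choose_spec.1
      apply hzf w hwW
      rw [hf]
      simp only [dif_neg hxw]
      exact heq ▸ hzb
    refine ⟨⟨b, hcard b hbB⟩, hbB, ?_⟩
    have hWadj : (kneserGraph n 3).Adj W ⟨b, hcard b hbB⟩ := by
      refine ⟨fun h => hxW ?_, hdisj.symm⟩
      have : W.1 = b := congrArg Subtype.val h
      exact this ▸ hxb
    have h1 : (kneserGraph n 3).dist W ⟨b, hcard b hbB⟩ = 1 :=
      SimpleGraph.dist_eq_one_iff_adj.2 hWadj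
    have h2 : (kneserGraph n 3).dist U ⟨b, hcard b hbB⟩ ≠ 1 := by
      intro h
      have hadj := SimpleGraph.dist_eq_one_iff_adj.1 h
      exact (Finset.disjoint_left.1 hadj.2) hxU hxb
    rw [h1]
    exact h2
  refine ⟨hres, ?_⟩
  -- counting : n.choose 2 = 3 * B.card
  have hpart : (Finset.univ : Finset (Fin n)).powersetCard 2
      = B.biUnion (fun b => b.powersetCard 2) := by
    ext p
    simp only [Finset.mem_powersetCard, Finset.mem_biUnion]
    constructor
    · rintro ⟨-, hp2⟩
      obtain ⟨a, c, hac, rfl⟩ := Finset.card_eq_two.1 hp2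
      obtain ⟨⟨hb, ha, hc⟩, -⟩ := (hsteiner a c hac).choose_spec
      refine ⟨_, hb, ?_, hp2⟩
      intro y hy
      rcases Finset.mem_insert.1 hy with rfl | hy
      · exact ha
      · rw [Finset.mem_singleton.1 hy]; exact hc
    · rintro ⟨b, hb, hpb, hp2⟩
      exact ⟨Finset.subset_univ _, hp2⟩
  have hdisjB : ∀ b₁ ∈ B, ∀ b₂ ∈ B, b₁ ≠ b₂ →
      Disjoint (b₁.powersetCard 2) (b₂.powersetCard 2) := by
    intro b₁ h₁ b₂ h₂ hne
    rw [Finset.disjoint_left]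
    intro p hp₁ hp₂
    rw [Finset.mem_powersetCard] at hp₁ hp₂
    obtain ⟨a, c, hac, rfl⟩ := Finset.card_eq_two.1 hp₁.2
    have ha₁ : a ∈ b₁ := hp₁.1 (by simp)
    have hc₁ : c ∈ b₁ := hp₁.1 (by simp)
    have ha₂ : a ∈ b₂ := hp₂.1 (by simp)
    have hc₂ : c ∈ b₂ := hp₂.1 (by simp)
    exact hne (((hsteiner a c hac).unique ⟨h₁, ha₁, hc₁⟩ ⟨h₂, ha₂, hc₂⟩))
  have hcount : n.choose 2 = 3 * B.card := by
    have := congrArg Finset.card hpart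
    rw [Finset.card_powersetCard, Finset.card_univ, Fintype.card_fin,
      Finset.card_biUnion hdisjB] at this
    rw [this]
    rw [Finset.sum_congr rfl (fun b hb => by
      rw [Finset.card_powersetCard, hcard b hb])]
    simp [Finset.sum_const, Nat.mul_comm]
  have hBle : B.card ≤ n * (n - 1) / 6 := by
    have h2 : n.choose 2 = n * (n - 1) / 2 := Nat.choose_two_right n
    obtain ⟨m, hm⟩ : Even (n * (n - 1)) := by
      obtain ⟨k, rfl⟩ : ∃ k, n = k + 1 := ⟨n - 1, by omega⟩
      simpa [Nat.mul_comm] using Nat.even_mul_succ_self k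
    omega
  -- build the resolving finset
  refine le_trans (Nat.sInf_le ?_) hBle
  refine ⟨B.attach.map ⟨fun b => (⟨b.1, hcard b.1 b.2⟩ :
      {s : Finset (Fin n) // s.card = 3}), ?_⟩, ?_, ?_⟩
  · intro b₁ b₂ h
    apply Subtype.ext
    injection h
  · convert hres using 1
    ext X
    simp only [Finset.coe_map, Finset.mem_coe, Set.mem_image, Finset.mem_coe,
      Finset.mem_attach, Set.mem_setOf_eq]
    constructor
    · rintro ⟨⟨c, hc⟩, hmem, rfl⟩
      exact hc
    · intro hX
      exact ⟨⟨X.1, hX⟩, by simp, Subtype.ext rfl⟩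
  · rw [Finset.card_map, Finset.card_attach]
end

section
/- Let a, b ≥ 10 be integers and n = ab. Identify the n-element set with V = (ℤ/aℤ) × (ℤ/bℤ). Then the collection of all straight paths with 4 vertices in the toroidal grid C_a □ C_b — i.e., all sets of the form {(x+i, y) : i = 0,1,2,3} or {(x, y+j) : j = 0,1,2,3} for (x,y) ∈ V — is a resolving set for the Kneser graph K(n,4) on the ground set V. Consequently β(K(n,4)) ≤ 2n for such n. -/
/-- The Kneser graph `K(n,k)` on a ground set `X`: vertices are the `k`-element
subsets of `X`, two vertices adjacent iff the corresponding subsets are disjoint. -/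
def kneserGraphOn (X : Type*) [DecidableEq X] (k : ℕ) :
    SimpleGraph {s : Finset X // s.card = k} where
  Adj U W := U ≠ W ∧ Disjoint U.1 W.1
  symm := by
    constructor
    intro U W h
    exact ⟨h.1.symm, h.2.symm⟩
  loopless := by
    constructor
    intro U h
    exact h.1 rfl

open Finset

lemma tg_inj {m : ℕ} (hm : 10 ≤ m) {i j : ℕ} (hi : i ≤ 9) (hj : j ≤ 9)
    (h : (i : ZMod m) = (j : ZMod m)) : i = j := by
  haveI : NeZero m := ⟨by omega⟩
  have h2 := congrArg ZMod.val h
  rwa [ZMod.val_cast_of_lt (by omega), ZMod.val_cast_of_lt (by omega)] at h2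

lemma tg_key {a b : ℕ} (ha : 10 ≤ a) (hb : 10 ≤ b)
    (U V : Finset (ZMod a × ZMod b)) (hV : V.card = 4)
    (Hh : ∀ (x : ZMod a) (y : ZMod b),
      (∃ i : Fin 4, (x + ((i : ℕ) : ZMod a), y) ∈ U) ↔
      (∃ i : Fin 4, (x + ((i : ℕ) : ZMod a), y) ∈ V))
    (Hv : ∀ (x : ZMod a) (y : ZMod b),
      (∃ j : Fin 4, (x, y + ((j : ℕ) : ZMod b)) ∈ U) ↔
      (∃ j : Fin 4, (x, y + ((j : ℕ) : ZMod b)) ∈ V))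
    (px : ZMod a) (py : ZMod b) (hpU : (px, py) ∈ U) (hpV : (px, py) ∉ V)
    (q : ZMod a × ZMod b) (hqV : q ∈ V) (hqU : q ∉ U) : False := by
  -- right arm
  obtain ⟨i1, hA1⟩ := (Hh px py).mp ⟨⟨0, by omega⟩, by simpa using hpU⟩
  set d1 : ℕ := (i1 : ℕ) with hd1
  have hd1b : d1 ≤ 3 := by omega
  have hd1a : 1 ≤ d1 := by
    rcases Nat.eq_zero_or_pos d1 with h | h
    · exfalso; apply hpV; simpa [h] using hA1
    · omega
  -- left arm
  obtain ⟨i2, hA2'⟩ := (Hh (px - ((3 : ℕ) : ZMod a)) py).mp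
    ⟨⟨3, by omega⟩, by
      have h3 : px - ((3 : ℕ) : ZMod a) + (((3 : ℕ)) : ZMod a) = px := by push_cast; ring
      simpa [h3] using hpU⟩
  have hi2b : (i2 : ℕ) ≤ 3 := by omega
  have hi2ne : (i2 : ℕ) ≠ 3 := by
    intro h
    apply hpV
    have h3 : px - ((3 : ℕ) : ZMod a) + (((i2 : ℕ)) : ZMod a) = px := by
      rw [h]; push_cast; ring
    rwa [h3] at hA2'
  set d2 : ℕ := 3 - (i2 : ℕ) with hd2
  have hd2a : 1 ≤ d2 := by omega
  have hd2b : d2 ≤ 3 := by omega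
  have hA2 : (px - ((d2 : ℕ) : ZMod a), py) ∈ V := by
    have h3 : px - ((3 : ℕ) : ZMod a) + (((i2 : ℕ)) : ZMod a) = px - ((d2 : ℕ) : ZMod a) := by
      rw [hd2, Nat.cast_sub hi2b]; push_cast; ring
    rwa [h3] at hA2'
  -- up arm
  obtain ⟨j3, hA3⟩ := (Hv px py).mp ⟨⟨0, by omega⟩, by simpa using hpU⟩
  set d3 : ℕ := (j3 : ℕ) with hd3
  have hd3b : d3 ≤ 3 := by omega
  have hd3a : 1 ≤ d3 := by
    rcases Nat.eq_zero_or_pos d3 with h | h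
    · exfalso; apply hpV; simpa [h] using hA3
    · omega
  -- down arm
  obtain ⟨j4, hA4'⟩ := (Hv px (py - ((3 : ℕ) : ZMod b))).mp
    ⟨⟨3, by omega⟩, by
      have h3 : py - ((3 : ℕ) : ZMod b) + (((3 : ℕ)) : ZMod b) = py := by push_cast; ring
      simpa [h3] using hpU⟩
  have hj4b : (j4 : ℕ) ≤ 3 := by omega
  have hj4ne : (j4 : ℕ) ≠ 3 := by
    intro h
    apply hpV
    have h3 : py - ((3 : ℕ) : ZMod b) + (((j4 : ℕ)) : ZMod b) = py := by
      rw [h]; push_cast; ring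
    rwa [h3] at hA4'
  set d4 : ℕ := 3 - (j4 : ℕ) with hd4
  have hd4a : 1 ≤ d4 := by omega
  have hd4b : d4 ≤ 3 := by omega
  have hA4 : (px, py - ((d4 : ℕ) : ZMod b)) ∈ V := by
    have h3 : py - ((3 : ℕ) : ZMod b) + (((j4 : ℕ)) : ZMod b) = py - ((d4 : ℕ) : ZMod b) := by
      rw [hd4, Nat.cast_sub hj4b]; push_cast; ring
    rwa [h3] at hA4'
  -- the four arm points
  set A1 : ZMod a × ZMod b := (px + ((d1 : ℕ) : ZMod a), py) with hA1d
  set A2 : ZMod a × ZMod b := (px - ((d2 : ℕ) : ZMod a), py) with hA2d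
  set A3 : ZMod a × ZMod b := (px, py + ((d3 : ℕ) : ZMod b)) with hA3d
  set A4 : ZMod a × ZMod b := (px, py - ((d4 : ℕ) : ZMod b)) with hA4d
  -- pairwise distinct
  have hne12 : A1 ≠ A2 := by
    intro h; rw [hA1d, hA2d, Prod.mk.injEq] at h
    have h1 : ((d1 + d2 : ℕ) : ZMod a) = ((0 : ℕ) : ZMod a) := by
      push_cast; linear_combination h.1
    have := tg_inj ha (by omega) (by omega) h1; omega
  have hne13 : A1 ≠ A3 := by
    intro h; rw [hA1d, hA3d, Prod.mk.injEq] at h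
    have h1 : ((d3 : ℕ) : ZMod b) = ((0 : ℕ) : ZMod b) := by
      push_cast; linear_combination -h.2
    have := tg_inj hb (by omega) (by omega) h1; omega
  have hne14 : A1 ≠ A4 := by
    intro h; rw [hA1d, hA4d, Prod.mk.injEq] at h
    have h1 : ((d4 : ℕ) : ZMod b) = ((0 : ℕ) : ZMod b) := by
      push_cast; linear_combination h.2
    have := tg_inj hb (by omega) (by omega) h1; omega
  have hne23 : A2 ≠ A3 := by
    intro h; rw [hA2d, hA3d, Prod.mk.injEq] at h
    have h1 : ((d3 : ℕ) : ZMod b) = ((0 : ℕ) : ZMod b) := by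
      push_cast; linear_combination -h.2
    have := tg_inj hb (by omega) (by omega) h1; omega
  have hne24 : A2 ≠ A4 := by
    intro h; rw [hA2d, hA4d, Prod.mk.injEq] at h
    have h1 : ((d4 : ℕ) : ZMod b) = ((0 : ℕ) : ZMod b) := by
      push_cast; linear_combination h.2
    have := tg_inj hb (by omega) (by omega) h1; omega
  have hne34 : A3 ≠ A4 := by
    intro h; rw [hA3d, hA4d, Prod.mk.injEq] at h
    have h1 : ((d3 + d4 : ℕ) : ZMod b) = ((0 : ℕ) : ZMod b) := by
      push_cast; linear_combination h.2
    have := tg_inj hb (by omega) (by omega) h1; omega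
  -- V is exactly the four arms
  have hTsub : ({A1, A2, A3, A4} : Finset (ZMod a × ZMod b)) ⊆ V := by
    intro z hz
    simp only [Finset.mem_insert, Finset.mem_singleton] at hz
    rcases hz with h | h | h | h <;> subst h
    · exact hA1
    · exact hA2
    · exact hA3
    · exact hA4
  have hTcard : ({A1, A2, A3, A4} : Finset (ZMod a × ZMod b)).card = 4 := by
    rw [Finset.card_insert_of_notMem (by simp [hne12, hne13, hne14]),
        Finset.card_insert_of_notMem (by simp [hne23, hne24]),
        Finset.card_insert_of_notMem (by simp [hne34]),
        Finset.card_singleton]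
  have hTV : ({A1, A2, A3, A4} : Finset (ZMod a × ZMod b)) = V :=
    Finset.eq_of_subset_of_card_le hTsub (by omega)
  have hmemV : ∀ z ∈ V, z = A1 ∨ z = A2 ∨ z = A3 ∨ z = A4 := by
    intro z hz; rw [← hTV] at hz; simpa using hz
  -- case analysis on q
  rcases hmemV q hqV with hq | hq | hq | hq <;> subst hq
  · -- q = A1 : vertical arm of q, then horizontal path through it
    obtain ⟨j, hj⟩ := (Hv (px + ((d1 : ℕ) : ZMod a)) py).mpr ⟨⟨0, by omega⟩, by simpa using hA1⟩
    have hjb : (j : ℕ) ≤ 3 := by omega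
    have hja : 1 ≤ (j : ℕ) := by
      rcases Nat.eq_zero_or_pos (j : ℕ) with h | h
      · exfalso; apply hqU; simpa [hA1d, h] using hj
      · omega
    obtain ⟨i, hi⟩ := (Hh (px + ((d1 : ℕ) : ZMod a)) (py + (((j : ℕ)) : ZMod b))).mp
      ⟨⟨0, by omega⟩, by simpa using hj⟩
    have hib : (i : ℕ) ≤ 3 := by omega
    rcases hmemV _ hi with h | h | h | h <;>
      simp only [hA1d, hA2d, hA3d, hA4d, Prod.mk.injEq] at h
    · have h1 : (((j : ℕ) : ℕ) : ZMod b) = ((0 : ℕ) : ZMod b) := by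
        push_cast; linear_combination h.2
      have := tg_inj hb (by omega) (by omega) h1; omega
    · have h1 : (((j : ℕ) : ℕ) : ZMod b) = ((0 : ℕ) : ZMod b) := by
        push_cast; linear_combination h.2
      have := tg_inj hb (by omega) (by omega) h1; omega
    · have h1 : ((d1 + (i : ℕ) : ℕ) : ZMod a) = ((0 : ℕ) : ZMod a) := by
        push_cast; linear_combination h.1
      have := tg_inj ha (by omega) (by omega) h1; omega
    · have h1 : ((d1 + (i : ℕ) : ℕ) : ZMod a) = ((0 : ℕ) : ZMod a) := by
        push_cast; linear_combination h.1
      have := tg_inj ha (by omega) (by omega) h1; omega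
  · -- q = A2
    obtain ⟨j, hj⟩ := (Hv (px - ((d2 : ℕ) : ZMod a)) py).mpr ⟨⟨0, by omega⟩, by simpa using hA2⟩
    have hjb : (j : ℕ) ≤ 3 := by omega
    have hja : 1 ≤ (j : ℕ) := by
      rcases Nat.eq_zero_or_pos (j : ℕ) with h | h
      · exfalso; apply hqU; simpa [hA2d, h] using hj
      · omega
    obtain ⟨i, hi⟩ := (Hh (px - ((d2 : ℕ) : ZMod a) - ((3 : ℕ) : ZMod a)) (py + (((j : ℕ)) : ZMod b))).mp
      ⟨⟨3, by omega⟩, by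
        have h3 : px - ((d2 : ℕ) : ZMod a) - ((3 : ℕ) : ZMod a) + (((3 : ℕ)) : ZMod a)
            = px - ((d2 : ℕ) : ZMod a) := by push_cast; ring
        simpa [h3] using hj⟩
    have hib : (i : ℕ) ≤ 3 := by omega
    rcases hmemV _ hi with h | h | h | h <;>
      simp only [hA1d, hA2d, hA3d, hA4d, Prod.mk.injEq] at h
    · have h1 : (((j : ℕ) : ℕ) : ZMod b) = ((0 : ℕ) : ZMod b) := by
        push_cast; linear_combination h.2
      have := tg_inj hb (by omega) (by omega) h1; omega
    · have h1 : (((j : ℕ) : ℕ) : ZMod b) = ((0 : ℕ) : ZMod b) := by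
        push_cast; linear_combination h.2
      have := tg_inj hb (by omega) (by omega) h1; omega
    · have h1 : (((i : ℕ) : ℕ) : ZMod a) = ((d2 + 3 : ℕ) : ZMod a) := by
        push_cast; linear_combination h.1
      have := tg_inj ha (by omega) (by omega) h1; omega
    · have h1 : (((i : ℕ) : ℕ) : ZMod a) = ((d2 + 3 : ℕ) : ZMod a) := by
        push_cast; linear_combination h.1
      have := tg_inj ha (by omega) (by omega) h1; omega
  · -- q = A3
    obtain ⟨j, hj⟩ := (Hh px (py + ((d3 : ℕ) : ZMod b))).mpr ⟨⟨0, by omega⟩, by simpa using hA3⟩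
    have hjb : (j : ℕ) ≤ 3 := by omega
    have hja : 1 ≤ (j : ℕ) := by
      rcases Nat.eq_zero_or_pos (j : ℕ) with h | h
      · exfalso; apply hqU; simpa [hA3d, h] using hj
      · omega
    obtain ⟨i, hi⟩ := (Hv (px + (((j : ℕ)) : ZMod a)) (py + ((d3 : ℕ) : ZMod b))).mp
      ⟨⟨0, by omega⟩, by simpa using hj⟩
    have hib : (i : ℕ) ≤ 3 := by omega
    rcases hmemV _ hi with h | h | h | h <;>
      simp only [hA1d, hA2d, hA3d, hA4d, Prod.mk.injEq] at h
    · have h1 : ((d3 + (i : ℕ) : ℕ) : ZMod b) = ((0 : ℕ) : ZMod b) := by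
        push_cast; linear_combination h.2
      have := tg_inj hb (by omega) (by omega) h1; omega
    · have h1 : ((d3 + (i : ℕ) : ℕ) : ZMod b) = ((0 : ℕ) : ZMod b) := by
        push_cast; linear_combination h.2
      have := tg_inj hb (by omega) (by omega) h1; omega
    · have h1 : (((j : ℕ) : ℕ) : ZMod a) = ((0 : ℕ) : ZMod a) := by
        push_cast; linear_combination h.1
      have := tg_inj ha (by omega) (by omega) h1; omega
    · have h1 : (((j : ℕ) : ℕ) : ZMod a) = ((0 : ℕ) : ZMod a) := by
        push_cast; linear_combination h.1
      have := tg_inj ha (by omega) (by omega) h1; omega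
  · -- q = A4
    obtain ⟨j, hj⟩ := (Hh px (py - ((d4 : ℕ) : ZMod b))).mpr ⟨⟨0, by omega⟩, by simpa using hA4⟩
    have hjb : (j : ℕ) ≤ 3 := by omega
    have hja : 1 ≤ (j : ℕ) := by
      rcases Nat.eq_zero_or_pos (j : ℕ) with h | h
      · exfalso; apply hqU; simpa [hA4d, h] using hj
      · omega
    obtain ⟨i, hi⟩ := (Hv (px + (((j : ℕ)) : ZMod a)) (py - ((d4 : ℕ) : ZMod b) - ((3 : ℕ) : ZMod b))).mp
      ⟨⟨3, by omega⟩, by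
        have h3 : py - ((d4 : ℕ) : ZMod b) - ((3 : ℕ) : ZMod b) + (((3 : ℕ)) : ZMod b)
            = py - ((d4 : ℕ) : ZMod b) := by push_cast; ring
        simpa [h3] using hj⟩
    have hib : (i : ℕ) ≤ 3 := by omega
    rcases hmemV _ hi with h | h | h | h <;>
      simp only [hA1d, hA2d, hA3d, hA4d, Prod.mk.injEq] at h
    · have h1 : (((i : ℕ) : ℕ) : ZMod b) = ((d4 + 3 : ℕ) : ZMod b) := by
        push_cast; linear_combination h.2
      have := tg_inj hb (by omega) (by omega) h1; omega
    · have h1 : (((i : ℕ) : ℕ) : ZMod b) = ((d4 + 3 : ℕ) : ZMod b) := by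
        push_cast; linear_combination h.2
      have := tg_inj hb (by omega) (by omega) h1; omega
    · have h1 : (((j : ℕ) : ℕ) : ZMod a) = ((0 : ℕ) : ZMod a) := by
        push_cast; linear_combination h.1
      have := tg_inj ha (by omega) (by omega) h1; omega
    · have h1 : (((j : ℕ) : ℕ) : ZMod a) = ((0 : ℕ) : ZMod a) := by
        push_cast; linear_combination h.1
      have := tg_inj ha (by omega) (by omega) h1; omega

lemma tg_card_h {a b : ℕ} (ha : 10 ≤ a) (x : ZMod a) (y : ZMod b) :
    (Finset.image (fun i : Fin 4 => (x + ((i : ℕ) : ZMod a), y)) Finset.univ).card = 4 := by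
  rw [Finset.card_image_of_injective _ ?_, Finset.card_univ, Fintype.card_fin]
  intro i j h
  rw [Prod.mk.injEq] at h
  have h1 : ((i : ℕ) : ZMod a) = ((j : ℕ) : ZMod a) := by
    have := h.1; exact add_left_cancel this
  exact Fin.ext (tg_inj ha (by omega) (by omega) h1)

lemma tg_card_v {a b : ℕ} (hb : 10 ≤ b) (x : ZMod a) (y : ZMod b) :
    (Finset.image (fun j : Fin 4 => (x, y + ((j : ℕ) : ZMod b))) Finset.univ).card = 4 := by
  rw [Finset.card_image_of_injective _ ?_, Finset.card_univ, Fintype.card_fin]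
  intro i j h
  rw [Prod.mk.injEq] at h
  have h1 : ((i : ℕ) : ZMod b) = ((j : ℕ) : ZMod b) := by
    have := h.2; exact add_left_cancel this
  exact Fin.ext (tg_inj hb (by omega) (by omega) h1)


lemma tg_sep {a b : ℕ} (ha : 10 ≤ a) (hb : 10 ≤ b)
    (U V : Finset (ZMod a × ZMod b)) (hU : U.card = 4) (hV : V.card = 4) (hne : U ≠ V) :
    ∃ (x : ZMod a) (y : ZMod b) (P : Finset (ZMod a × ZMod b)),
      (P = Finset.image (fun i : Fin 4 => (x + ((i : ℕ) : ZMod a), y)) Finset.univ ∨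
       P = Finset.image (fun j : Fin 4 => (x, y + ((j : ℕ) : ZMod b))) Finset.univ) ∧
      (((∀ z ∈ P, z ∉ U) ∧ ∃ z ∈ P, z ∈ V) ∨ ((∀ z ∈ P, z ∉ V) ∧ ∃ z ∈ P, z ∈ U)) := by
  by_contra hcon
  push_neg at hcon
  have Hh : ∀ (x : ZMod a) (y : ZMod b),
      (∃ i : Fin 4, (x + ((i : ℕ) : ZMod a), y) ∈ U) ↔
      (∃ i : Fin 4, (x + ((i : ℕ) : ZMod a), y) ∈ V) := by
    intro x y
    have hc := hcon x y (Finset.image (fun i : Fin 4 => (x + ((i : ℕ) : ZMod a), y)) Finset.univ)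
      (Or.inl rfl)
    obtain ⟨hc1, hc2⟩ := hc
    constructor
    · rintro ⟨i, hi⟩
      by_contra hno
      push_neg at hno
      refine absurd (hc2 ?_) ?_
      · intro z hz
        obtain ⟨i', _, rfl⟩ := Finset.mem_image.mp hz
        exact hno i'
      · push_neg
        exact ⟨_, Finset.mem_image.mpr ⟨i, Finset.mem_univ _, rfl⟩, hi⟩
    · rintro ⟨i, hi⟩
      by_contra hno
      push_neg at hno
      refine absurd (hc1 ?_) ?_
      · intro z hz
        obtain ⟨i', _, rfl⟩ := Finset.mem_image.mp hz
        exact hno i'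
      · push_neg
        exact ⟨_, Finset.mem_image.mpr ⟨i, Finset.mem_univ _, rfl⟩, hi⟩
  have Hv : ∀ (x : ZMod a) (y : ZMod b),
      (∃ j : Fin 4, (x, y + ((j : ℕ) : ZMod b)) ∈ U) ↔
      (∃ j : Fin 4, (x, y + ((j : ℕ) : ZMod b)) ∈ V) := by
    intro x y
    have hc := hcon x y (Finset.image (fun j : Fin 4 => (x, y + ((j : ℕ) : ZMod b))) Finset.univ)
      (Or.inr rfl)
    obtain ⟨hc1, hc2⟩ := hc
    constructor
    · rintro ⟨i, hi⟩
      by_contra hno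
      push_neg at hno
      refine absurd (hc2 ?_) ?_
      · intro z hz
        obtain ⟨i', _, rfl⟩ := Finset.mem_image.mp hz
        exact hno i'
      · push_neg
        exact ⟨_, Finset.mem_image.mpr ⟨i, Finset.mem_univ _, rfl⟩, hi⟩
    · rintro ⟨i, hi⟩
      by_contra hno
      push_neg at hno
      refine absurd (hc1 ?_) ?_
      · intro z hz
        obtain ⟨i', _, rfl⟩ := Finset.mem_image.mp hz
        exact hno i'
      · push_neg
        exact ⟨_, Finset.mem_image.mpr ⟨i, Finset.mem_univ _, rfl⟩, hi⟩
  have hp : ∃ p ∈ U, p ∉ V := by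
    by_contra h
    push_neg at h
    exact hne (Finset.eq_of_subset_of_card_le h (by omega))
  have hq : ∃ q ∈ V, q ∉ U := by
    by_contra h
    push_neg at h
    exact hne (Finset.eq_of_subset_of_card_le h (by omega)).symm
  obtain ⟨⟨px, py⟩, hpU, hpV⟩ := hp
  obtain ⟨q, hqV, hqU⟩ := hq
  exact tg_key ha hb U V hV Hh Hv px py hpU hpV q hqV hqU


/-- For `a, b ≥ 10` and `n = ab`, the collection of all straight paths with 4
vertices in the toroidal grid `C_a □ C_b` is a resolving set for the Kneser graph
`K(n,4)` on the ground set `(ℤ/aℤ) × (ℤ/bℤ)`; consequently `β(K(n,4)) ≤ 2n`. -/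
theorem toroidal_grid_resolving_kneser_4 (a b : ℕ) (ha : 10 ≤ a) (hb : 10 ≤ b) :
    resolvingSet (kneserGraphOn (ZMod a × ZMod b) 4)
      {X | ∃ (x : ZMod a) (y : ZMod b),
        X.1 = Finset.image (fun i : Fin 4 => (x + (i : ℕ), y)) Finset.univ ∨
        X.1 = Finset.image (fun j : Fin 4 => (x, y + (j : ℕ))) Finset.univ} ∧
    metricDim (kneserGraphOn (ZMod a × ZMod b) 4) ≤ 2 * (a * b) := by
  haveI : NeZero a := ⟨by omega⟩
  haveI : NeZero b := ⟨by omega⟩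
  classical
  have hres : resolvingSet (kneserGraphOn (ZMod a × ZMod b) 4)
      {X | ∃ (x : ZMod a) (y : ZMod b),
        X.1 = Finset.image (fun i : Fin 4 => (x + (i : ℕ), y)) Finset.univ ∨
        X.1 = Finset.image (fun j : Fin 4 => (x, y + (j : ℕ))) Finset.univ} := by
    intro U V hUV
    have hne : U.1 ≠ V.1 := fun h => hUV (Subtype.ext h)
    obtain ⟨x, y, P, hPform, hsep⟩ := tg_sep ha hb U.1 V.1 U.2 V.2 hne
    have hP4 : P.card = 4 := by
      rcases hPform with h | h
      · rw [h]; exact tg_card_h ha x y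
      · rw [h]; exact tg_card_v hb x y
    refine ⟨⟨P, hP4⟩, ⟨x, y, by simpa using hPform⟩, ?_⟩
    rcases hsep with ⟨hdisj, z, hzP, hzV⟩ | ⟨hdisj, z, hzP, hzU⟩
    · have hadj : (kneserGraphOn (ZMod a × ZMod b) 4).Adj U ⟨P, hP4⟩ := by
        refine ⟨?_, Finset.disjoint_right.mpr hdisj⟩
        intro h
        exact hdisj z hzP (by rw [show U.1 = P from congrArg Subtype.val h]; exact hzP)
      have h1 : (kneserGraphOn (ZMod a × ZMod b) 4).dist U ⟨P, hP4⟩ = 1 :=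
        SimpleGraph.dist_eq_one_iff_adj.mpr hadj
      have h2 : (kneserGraphOn (ZMod a × ZMod b) 4).dist V ⟨P, hP4⟩ ≠ 1 := by
        intro h
        have hadj' := SimpleGraph.dist_eq_one_iff_adj.mp h
        exact Finset.disjoint_left.mp hadj'.2 hzV hzP
      rw [h1]
      exact fun h => h2 h.symm
    · have hadj : (kneserGraphOn (ZMod a × ZMod b) 4).Adj V ⟨P, hP4⟩ := by
        refine ⟨?_, Finset.disjoint_right.mpr hdisj⟩
        intro h
        exact hdisj z hzP (by rw [show V.1 = P from congrArg Subtype.val h]; exact hzP)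
      have h1 : (kneserGraphOn (ZMod a × ZMod b) 4).dist V ⟨P, hP4⟩ = 1 :=
        SimpleGraph.dist_eq_one_iff_adj.mpr hadj
      have h2 : (kneserGraphOn (ZMod a × ZMod b) 4).dist U ⟨P, hP4⟩ ≠ 1 := by
        intro h
        have hadj' := SimpleGraph.dist_eq_one_iff_adj.mp h
        exact Finset.disjoint_left.mp hadj'.2 hzU hzP
      rw [h1]
      exact h2
  refine ⟨hres, ?_⟩
  set pred : {s : Finset (ZMod a × ZMod b) // s.card = 4} → Prop := fun X =>
    ∃ (x : ZMod a) (y : ZMod b),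
      X.1 = Finset.image (fun i : Fin 4 => (x + (i : ℕ), y)) Finset.univ ∨
      X.1 = Finset.image (fun j : Fin 4 => (x, y + (j : ℕ))) Finset.univ with hpred
  set S : Finset {s : Finset (ZMod a × ZMod b) // s.card = 4} :=
    Finset.univ.filter pred with hS
  have hScoe : (↑S : Set {s : Finset (ZMod a × ZMod b) // s.card = 4}) = {X | pred X} := by
    ext X
    simp [hS]
  have hresS : resolvingSet (kneserGraphOn (ZMod a × ZMod b) 4) ↑S := by
    rw [hScoe]
    exact hres
  refine le_trans (Nat.sInf_le ⟨S, hresS, rfl⟩) ?_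
  have hcard : S.card = (S.image Subtype.val).card :=
    (Finset.card_image_of_injective S Subtype.val_injective).symm
  have hsub : S.image Subtype.val ⊆ Finset.image
      (fun t : (ZMod a × ZMod b) × Bool =>
        if t.2 then Finset.image (fun i : Fin 4 => (t.1.1 + ((i : ℕ) : ZMod a), t.1.2)) Finset.univ
        else Finset.image (fun j : Fin 4 => (t.1.1, t.1.2 + ((j : ℕ) : ZMod b))) Finset.univ)
      Finset.univ := by
    intro P hP
    obtain ⟨X, hXS, rfl⟩ := Finset.mem_image.mp hP
    obtain ⟨x, y, hx⟩ := (Finset.mem_filter.mp hXS).2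
    rcases hx with h | h
    · exact Finset.mem_image.mpr ⟨((x, y), true), Finset.mem_univ _, by simp [h.symm]⟩
    · exact Finset.mem_image.mpr ⟨((x, y), false), Finset.mem_univ _, by simp [h.symm]⟩
  calc S.card = (S.image Subtype.val).card := hcard
    _ ≤ _ := Finset.card_le_card hsub
    _ ≤ (Finset.univ : Finset ((ZMod a × ZMod b) × Bool)).card := Finset.card_image_le
    _ = 2 * (a * b) := by
        rw [Finset.card_univ]
        simp [ZMod.card]
        ring
end

section
/- Let a, b ≥ 13 be integers and n = ab. Identify the n-element set with V = (ℤ/aℤ) × (ℤ/bℤ). Then the collection of all straight paths with 5 vertices in the toroidal grid C_a □ C_b — i.e., all sets of the form {(x+i, y) : i = 0,...,4} or {(x, y+j) : j = 0,...,4} for (x,y) ∈ V — is a resolving set for the Kneser graph K(n,5) on the ground set V. Consequently β(K(n,5)) ≤ 2n for such n. -/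
namespace TGK5

open Finset

variable {m : ℕ} {a b : ℕ}

lemma cast_inj13 (hm : 13 ≤ m) {x y : ℕ} (hx : x < 13) (hy : y < 13)
    (h : (x : ZMod m) = y) : x = y := by
  rw [ZMod.natCast_eq_natCast_iff'] at h
  rwa [Nat.mod_eq_of_lt (lt_of_lt_of_le hx hm), Nat.mod_eq_of_lt (lt_of_lt_of_le hy hm)] at h

lemma add_one_nat_ne (hm : 13 ≤ m) (z : ZMod m) (i : Fin 5) : z + 1 + ((i : ℕ) : ZMod m) ≠ z := by
  intro h
  have hc : ((1 + (i : ℕ) : ℕ) : ZMod m) = ((0 : ℕ) : ZMod m) := by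
    push_cast
    linear_combination h
  have := cast_inj13 hm (by have := i.isLt; omega) (by omega) hc
  omega

/-- transfer of "right-exposed" points. -/
lemma right_exposed (S T : ZMod m → Prop)
    (H : ∀ s : ZMod m, (∀ i : Fin 5, ¬ S (s + (i : ℕ))) ↔ (∀ i : Fin 5, ¬ T (s + (i : ℕ))))
    (z : ZMod m) (hz : S z) (habove : ∀ i : Fin 5, ¬ S (z + 1 + (i : ℕ))) : T z := by
  have h1 : ∀ i : Fin 5, ¬ T (z + 1 + (i : ℕ)) := (H (z + 1)).mp habove
  by_contra hzT
  have h2 : ∀ i : Fin 5, ¬ T (z + (i : ℕ)) := by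
    intro i
    match i with
    | ⟨0, _⟩ => simpa using hzT
    | ⟨k+1, hk⟩ =>
      have e : z + (((k+1 : ℕ) : ℕ) : ZMod m) = z + 1 + ((k : ℕ) : ZMod m) := by push_cast; ring
      simp only [e]
      exact h1 ⟨k, by omega⟩
  have := (H z).mpr h2 ⟨0, by omega⟩
  simp only [Nat.cast_zero, add_zero] at this
  exact this hz

/-- transfer of "left-exposed" points. -/
lemma left_exposed (S T : ZMod m → Prop)
    (H : ∀ s : ZMod m, (∀ i : Fin 5, ¬ S (s + (i : ℕ))) ↔ (∀ i : Fin 5, ¬ T (s + (i : ℕ))))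
    (z : ZMod m) (hz : S z) (hbelow : ∀ i : Fin 5, ¬ S (z - 5 + (i : ℕ))) : T z := by
  have h1 : ∀ i : Fin 5, ¬ T (z - 5 + (i : ℕ)) := (H (z - 5)).mp hbelow
  by_contra hzT
  have h2 : ∀ i : Fin 5, ¬ T (z - 4 + (i : ℕ)) := by
    intro i
    match i with
    | ⟨4, _⟩ => simpa using hzT
    | ⟨0, _⟩ =>
      have e : z - 4 + ((0 : ℕ) : ZMod m) = z - 5 + ((1 : ℕ) : ZMod m) := by push_cast; ring
      rw [e]; exact h1 ⟨1, by omega⟩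
    | ⟨1, _⟩ =>
      have e : z - 4 + ((1 : ℕ) : ZMod m) = z - 5 + ((2 : ℕ) : ZMod m) := by push_cast; ring
      rw [e]; exact h1 ⟨2, by omega⟩
    | ⟨2, _⟩ =>
      have e : z - 4 + ((2 : ℕ) : ZMod m) = z - 5 + ((3 : ℕ) : ZMod m) := by push_cast; ring
      rw [e]; exact h1 ⟨3, by omega⟩
    | ⟨3, _⟩ =>
      have e : z - 4 + ((3 : ℕ) : ZMod m) = z - 5 + ((4 : ℕ) : ZMod m) := by push_cast; ring
      rw [e]; exact h1 ⟨4, by omega⟩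
  have := (H (z - 4)).mpr h2 ⟨4, by omega⟩
  apply this
  have e : z - 4 + ((4 : ℕ) : ZMod m) = z := by push_cast; ring
  rw [e]; exact hz

/-- Key lemma: if the "window-hit" patterns of `S` and `T` agree, some window misses `S`,
and `x ∈ S \ T`, then there are two distinct common points of `S` and `T`, both `≠ x`. -/
lemma lemA (hm : 13 ≤ m) (S T : ZMod m → Prop)
    (H : ∀ s : ZMod m, (∀ i : Fin 5, ¬ S (s + (i : ℕ))) ↔ (∀ i : Fin 5, ¬ T (s + (i : ℕ))))
    (x : ZMod m) (hxS : S x) (hxT : ¬ T x)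
    (t : ZMod m) (ht : ∀ i : Fin 5, ¬ S (t + (i : ℕ))) :
    ∃ M M' : ZMod m, S M ∧ T M ∧ S M' ∧ T M' ∧ M ≠ M' ∧ M ≠ x ∧ M' ≠ x := by
  haveI : NeZero m := ⟨by omega⟩
  classical
  set j0 := (t - x).val with hj0def
  have hj0lt : j0 < m := ZMod.val_lt _
  have htx : t = x + (j0 : ZMod m) := by
    rw [hj0def, ZMod.natCast_val, ZMod.cast_id]; ring
  have hxne : ∀ k : ℕ, k ≤ 4 → x ≠ t + (k : ZMod m) := by
    intro k hk he
    exact ht ⟨k, by omega⟩ (he ▸ hxS)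
  have hj0ge : 1 ≤ j0 := by
    rcases Nat.eq_zero_or_pos j0 with h | h
    · exfalso
      apply hxne 0 (by omega)
      rw [htx, h]
      push_cast
      ring
    · exact h
  have hj0le : j0 ≤ m - 5 := by
    by_contra hcon
    push_neg at hcon
    apply hxne (m - j0) (by omega)
    rw [htx]
    have hz : ((j0 : ℕ) : ZMod m) + ((m - j0 : ℕ) : ZMod m) = 0 := by
      rw [← Nat.cast_add]
      have he : j0 + (m - j0) = m := by omega
      rw [he, ZMod.natCast_self]
    rw [add_assoc, hz, add_zero]
  -- right side
  set mr := Nat.findGreatest (fun j => S (x + (j : ZMod m))) (j0 - 1) with hmrdef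
  have hmrP : S (x + (mr : ZMod m)) := by
    have := Nat.findGreatest_spec (P := fun j => S (x + (j : ZMod m))) (Nat.zero_le (j0 - 1))
      (by simpa using hxS)
    rw [← hmrdef] at this
    exact this
  have hmrle : mr ≤ j0 - 1 := hmrdef ▸ Nat.findGreatest_le _
  have hgapR : ∀ k : ℕ, 1 ≤ k → k ≤ 5 → ¬ S (x + ((mr + k : ℕ) : ZMod m)) := by
    intro k hk1 hk5
    by_cases hc : mr + k ≤ j0 - 1
    · have hgt : Nat.findGreatest (fun j => S (x + (j : ZMod m))) (j0 - 1) < mr + k := by omega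
      exact Nat.findGreatest_is_greatest hgt hc
    · have e : x + ((mr + k : ℕ) : ZMod m) = t + ((mr + k - j0 : ℕ) : ZMod m) := by
        rw [htx, add_assoc, ← Nat.cast_add]
        congr 2
        omega
      rw [e]
      exact ht ⟨mr + k - j0, by omega⟩
  have hMS : S (x + (mr : ZMod m)) := hmrP
  have hMT : T (x + (mr : ZMod m)) := by
    apply right_exposed S T H _ hMS
    intro i
    have e : x + (mr : ZMod m) + 1 + ((i : ℕ) : ZMod m) = x + ((mr + ((i : ℕ) + 1) : ℕ) : ZMod m) := by
      push_cast; ring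
    rw [e]
    exact hgapR ((i : ℕ) + 1) (by omega) (by have := i.isLt; omega)
  -- left side
  set d := m - j0 - 4 with hddef
  have hd1 : 1 ≤ d := by omega
  set ml := Nat.findGreatest (fun j => S (x - (j : ZMod m))) (d - 1) with hmldef
  have hmlQ : S (x - (ml : ZMod m)) := by
    have := Nat.findGreatest_spec (P := fun j => S (x - (j : ZMod m))) (Nat.zero_le (d - 1))
      (by simpa using hxS)
    rw [← hmldef] at this
    exact this
  have hmlle : ml ≤ d - 1 := hmldef ▸ Nat.findGreatest_le _
  have hgapL : ∀ k : ℕ, 1 ≤ k → k ≤ 5 → ¬ S (x - ((ml + k : ℕ) : ZMod m)) := by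
    intro k hk1 hk5
    by_cases hc : ml + k ≤ d - 1
    · have hgt : Nat.findGreatest (fun j => S (x - (j : ZMod m))) (d - 1) < ml + k := by omega
      exact Nat.findGreatest_is_greatest hgt hc
    · have hcge : d ≤ ml + k := by omega
      set c := ml + k - d with hcdef
      have hc4 : c ≤ 4 := by omega
      have e0 : (ml + k) + (j0 + (4 - c)) = m := by omega
      have hz : ((ml + k : ℕ) : ZMod m) + ((j0 + (4 - c) : ℕ) : ZMod m) = 0 := by
        rw [← Nat.cast_add, e0, ZMod.natCast_self]
      have e : x - ((ml + k : ℕ) : ZMod m) = t + ((4 - c : ℕ) : ZMod m) := by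
        rw [htx]
        have h2 : ((ml + k : ℕ) : ZMod m) = -(((j0 + (4 - c) : ℕ) : ZMod m)) :=
          eq_neg_of_add_eq_zero_left hz
        rw [h2, Nat.cast_add]
        ring
      rw [e]
      exact ht ⟨4 - c, by omega⟩
  have hM'S : S (x - (ml : ZMod m)) := hmlQ
  have hM'T : T (x - (ml : ZMod m)) := by
    apply left_exposed S T H _ hM'S
    intro i
    have hi5 : (i : ℕ) ≤ 5 := by have := i.isLt; omega
    have e : x - (ml : ZMod m) - 5 + ((i : ℕ) : ZMod m)
        = x - ((ml + (5 - (i : ℕ)) : ℕ) : ZMod m) := by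
      push_cast [Nat.cast_sub hi5]
      ring
    rw [e]
    exact hgapL (5 - (i : ℕ)) (by have := i.isLt; omega) (by omega)
  have hMne : x + (mr : ZMod m) ≠ x - (ml : ZMod m) := by
    intro he
    have hz : ((mr + ml : ℕ) : ZMod m) = 0 := by
      push_cast
      linear_combination he
    rw [ZMod.natCast_eq_zero_iff] at hz
    have h0 : mr + ml = 0 := Nat.eq_zero_of_dvd_of_lt hz (by omega)
    have hmr0 : mr = 0 := by omega
    rw [hmr0] at hMT
    simp only [Nat.cast_zero, add_zero] at hMT
    exact hxT hMT
  refine ⟨x + (mr : ZMod m), x - (ml : ZMod m), hMS, hMT, hM'S, hM'T, hMne, ?_, ?_⟩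
  · intro he; exact hxT (he ▸ hMT)
  · intro he; exact hxT (he ▸ hM'T)

/-- There is a 5-window avoiding any two given points (m ≥ 13). -/
lemma lemB' (hm : 13 ≤ m) (u v : ZMod m) :
    ∃ s : ZMod m, ∀ i : Fin 5, s + ((i : ℕ) : ZMod m) ≠ u ∧ s + ((i : ℕ) : ZMod m) ≠ v := by
  by_cases hv : ∃ k : Fin 5, v = u + 1 + ((k : ℕ) : ZMod m)
  · obtain ⟨k, hk⟩ := hv
    refine ⟨u + 7, fun i => ⟨?_, ?_⟩⟩
    · intro he
      have hc : ((7 + (i : ℕ) : ℕ) : ZMod m) = ((0 : ℕ) : ZMod m) := by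
        push_cast
        linear_combination he
      have := cast_inj13 hm (by have := i.isLt; omega) (by omega) hc
      omega
    · rw [hk]
      intro he
      have hc : ((7 + (i : ℕ) : ℕ) : ZMod m) = ((1 + (k : ℕ) : ℕ) : ZMod m) := by
        push_cast
        linear_combination he
      have := cast_inj13 hm (by have := i.isLt; omega) (by have := k.isLt; omega) hc
      omega
  · push_neg at hv
    refine ⟨u + 1, fun i => ⟨?_, ?_⟩⟩
    · intro he
      have hc : ((1 + (i : ℕ) : ℕ) : ZMod m) = ((0 : ℕ) : ZMod m) := by
        push_cast
        linear_combination he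
      have := cast_inj13 hm (by have := i.isLt; omega) (by omega) hc
      omega
    · intro he
      exact hv i he.symm

/-- If every 5-window hits `S`, then `S` has two extra elements besides any given one. -/
lemma lemC (hm : 13 ≤ m) (S : ZMod m → Prop)
    (hfull : ∀ s : ZMod m, ∃ i : Fin 5, S (s + ((i : ℕ) : ZMod m)))
    (x : ZMod m) : ∃ y z : ZMod m, S y ∧ S z ∧ y ≠ z ∧ y ≠ x ∧ z ≠ x := by
  obtain ⟨s1, hs1⟩ := lemB' hm x x
  obtain ⟨i1, hi1⟩ := hfull s1
  obtain ⟨s2, hs2⟩ := lemB' hm x (s1 + ((i1 : ℕ) : ZMod m))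
  obtain ⟨i2, hi2⟩ := hfull s2
  exact ⟨s1 + ((i1 : ℕ) : ZMod m), s2 + ((i2 : ℕ) : ZMod m), hi1, hi2,
    fun h => (hs2 i2).2 h.symm, (hs1 i1).1, (hs2 i2).1⟩

/-- If every 5-window hits `S`, then `S` has three pairwise-distinct elements. -/
lemma lemC3 (hm : 13 ≤ m) (S : ZMod m → Prop)
    (hfull : ∀ s : ZMod m, ∃ i : Fin 5, S (s + ((i : ℕ) : ZMod m))) :
    ∃ x y z : ZMod m, S x ∧ S y ∧ S z ∧ x ≠ y ∧ x ≠ z ∧ y ≠ z := by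
  obtain ⟨i0, h0⟩ := hfull 0
  obtain ⟨y, z, hy, hz, hyz, hyx, hzx⟩ := lemC hm S hfull (0 + ((i0 : ℕ) : ZMod m))
  exact ⟨0 + ((i0 : ℕ) : ZMod m), y, z, h0, hy, hz, fun h => hyx h.symm, fun h => hzx h.symm, hyz⟩

lemma pair_ne_left {α β : Type*} {x x' : α} {y y' : β} (h : x ≠ x') : (x, y) ≠ (x', y') :=
  fun he => h (congrArg Prod.fst he)

lemma pair_ne_right {α β : Type*} {x x' : α} {y y' : β} (h : y ≠ y') : (x, y) ≠ (x', y') :=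
  fun he => h (congrArg Prod.snd he)

lemma eq_of_five {α : Type*} [DecidableEq α] {U : Finset α} (hU : U.card = 5)
    {p A B C D : α} (hp : p ∈ U) (hA : A ∈ U) (hB : B ∈ U) (hC : C ∈ U) (hD : D ∈ U)
    (h1 : p ≠ A) (h2 : p ≠ B) (h3 : p ≠ C) (h4 : p ≠ D) (h5 : A ≠ B) (h6 : A ≠ C)
    (h7 : A ≠ D) (h8 : B ≠ C) (h9 : B ≠ D) (h10 : C ≠ D) :
    U = {p, A, B, C, D} := by
  have hsub : ({p, A, B, C, D} : Finset α) ⊆ U := by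
    intro z hz
    simp only [mem_insert, mem_singleton] at hz
    rcases hz with rfl | rfl | rfl | rfl | rfl <;> assumption
  have hcard : ({p, A, B, C, D} : Finset α).card = 5 := by
    rw [card_insert_of_notMem (by simp [h1, h2, h3, h4]),
        card_insert_of_notMem (by simp [h5, h6, h7]),
        card_insert_of_notMem (by simp [h8, h9]),
        card_insert_of_notMem (by simp [h10]), card_singleton]
  exact (eq_of_subset_of_card_le hsub (by omega)).symm

lemma card_three {α : Type*} [DecidableEq α] {x y z : α} (h1 : x ≠ y) (h2 : x ≠ z) (h3 : y ≠ z) :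
    ({x, y, z} : Finset α).card = 3 := by
  rw [card_insert_of_notMem (by simp [h1, h2]), card_insert_of_notMem (by simp [h3]),
    card_singleton]

lemma card_four {α : Type*} [DecidableEq α] {x y z w : α} (h1 : x ≠ y) (h2 : x ≠ z) (h3 : x ≠ w)
    (h4 : y ≠ z) (h5 : y ≠ w) (h6 : z ≠ w) : ({x, y, z, w} : Finset α).card = 4 := by
  rw [card_insert_of_notMem (by simp [h1, h2, h3]), card_insert_of_notMem (by simp [h4, h5]),
    card_insert_of_notMem (by simp [h6]), card_singleton]

lemma mem_swapF {α β : Type*} [DecidableEq α] [DecidableEq β] (U : Finset (α × β)) (z : β × α) :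
    z ∈ U.image Prod.swap ↔ (z.2, z.1) ∈ U := by
  simp only [Finset.mem_image]
  constructor
  · rintro ⟨w, hw, rfl⟩
    simpa using hw
  · intro h
    exact ⟨(z.2, z.1), h, rfl⟩

/-- Case: both the row and the column of `p` are fully covered (every window hits `U`). -/
lemma case_full (ha : 13 ≤ a) (hb : 13 ≤ b)
    {U W : Finset (ZMod a × ZMod b)} (hW : W.card = 5)
    (Hh : ∀ (x : ZMod a) (y : ZMod b),
      (∀ i : Fin 5, (x + ((i : ℕ) : ZMod a), y) ∉ U) ↔
      (∀ i : Fin 5, (x + ((i : ℕ) : ZMod a), y) ∉ W))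
    (Hv : ∀ (x : ZMod a) (y : ZMod b),
      (∀ i : Fin 5, (x, y + ((i : ℕ) : ZMod b)) ∉ U) ↔
      (∀ i : Fin 5, (x, y + ((i : ℕ) : ZMod b)) ∉ W))
    {p : ZMod a × ZMod b} (hpW : p ∉ W)
    (hR : ¬ ∃ t : ZMod a, ∀ i : Fin 5, (t + ((i : ℕ) : ZMod a), p.2) ∉ U)
    (hC : ¬ ∃ t : ZMod b, ∀ i : Fin 5, (p.1, t + ((i : ℕ) : ZMod b)) ∉ U) : False := by
  have hRW : ∀ s : ZMod a, ∃ i : Fin 5, (s + ((i : ℕ) : ZMod a), p.2) ∈ W := by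
    intro s
    by_contra h
    push_neg at h
    exact hR ⟨s, (Hh s p.2).mpr h⟩
  have hCW : ∀ s : ZMod b, ∃ i : Fin 5, (p.1, s + ((i : ℕ) : ZMod b)) ∈ W := by
    intro s
    by_contra h
    push_neg at h
    exact hC ⟨s, (Hv p.1 s).mpr h⟩
  obtain ⟨e1, e2, e3, he1, he2, he3, hd12, hd13, hd23⟩ :=
    lemC3 ha (fun z => (z, p.2) ∈ W) hRW
  obtain ⟨f1, f2, f3, hf1, hf2, hf3, hg12, hg13, hg23⟩ :=
    lemC3 hb (fun z => (p.1, z) ∈ W) hCW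
  have hEW : ({(e1, p.2), (e2, p.2), (e3, p.2)} : Finset (ZMod a × ZMod b)) ⊆ W := by
    intro z hz
    simp only [mem_insert, mem_singleton] at hz
    rcases hz with rfl | rfl | rfl <;> assumption
  have hFW : ({(p.1, f1), (p.1, f2), (p.1, f3)} : Finset (ZMod a × ZMod b)) ⊆ W := by
    intro z hz
    simp only [mem_insert, mem_singleton] at hz
    rcases hz with rfl | rfl | rfl <;> assumption
  have hdisj : Disjoint ({(e1, p.2), (e2, p.2), (e3, p.2)} : Finset (ZMod a × ZMod b))
      ({(p.1, f1), (p.1, f2), (p.1, f3)} : Finset (ZMod a × ZMod b)) := by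
    rw [Finset.disjoint_left]
    intro z hzE hzF
    have hz2 : z.2 = p.2 := by
      simp only [mem_insert, mem_singleton] at hzE
      rcases hzE with rfl | rfl | rfl <;> rfl
    have hz1 : z.1 = p.1 := by
      simp only [mem_insert, mem_singleton] at hzF
      rcases hzF with rfl | rfl | rfl <;> rfl
    have hzp : z = p := Prod.ext_iff.mpr ⟨hz1, hz2⟩
    exact hpW (hzp ▸ hEW hzE)
  have hcE : ({(e1, p.2), (e2, p.2), (e3, p.2)} : Finset (ZMod a × ZMod b)).card = 3 :=
    card_three (pair_ne_left hd12) (pair_ne_left hd13) (pair_ne_left hd23)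
  have hcF : ({(p.1, f1), (p.1, f2), (p.1, f3)} : Finset (ZMod a × ZMod b)).card = 3 :=
    card_three (pair_ne_right hg12) (pair_ne_right hg13) (pair_ne_right hg23)
  have hle := Finset.card_le_card (Finset.union_subset hEW hFW)
  rw [Finset.card_union_of_disjoint hdisj, hcE, hcF, hW] at hle
  omega

/-- Case: the row of `p` is fully covered by `U` but its column is not. -/
lemma case_mixed (ha : 13 ≤ a) (hb : 13 ≤ b)
    {U W : Finset (ZMod a × ZMod b)} (hU : U.card = 5) (hW : W.card = 5)
    (Hh : ∀ (x : ZMod a) (y : ZMod b),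
      (∀ i : Fin 5, (x + ((i : ℕ) : ZMod a), y) ∉ U) ↔
      (∀ i : Fin 5, (x + ((i : ℕ) : ZMod a), y) ∉ W))
    (Hv : ∀ (x : ZMod a) (y : ZMod b),
      (∀ i : Fin 5, (x, y + ((i : ℕ) : ZMod b)) ∉ U) ↔
      (∀ i : Fin 5, (x, y + ((i : ℕ) : ZMod b)) ∉ W))
    {p : ZMod a × ZMod b} (hpU : p ∈ U) (hpW : p ∉ W)
    (hR : ¬ ∃ t : ZMod a, ∀ i : Fin 5, (t + ((i : ℕ) : ZMod a), p.2) ∉ U)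
    (hC : ∃ t : ZMod b, ∀ i : Fin 5, (p.1, t + ((i : ℕ) : ZMod b)) ∉ U) : False := by
  obtain ⟨tc, htc⟩ := hC
  obtain ⟨Nc, Nd, hNcU, hNcW, hNdU, hNdW, hNcd, hNcp, hNdp⟩ :=
    lemA hb (fun z => (p.1, z) ∈ U) (fun z => (p.1, z) ∈ W)
      (fun s => Hv p.1 s) p.2 (by simpa using hpU) (by simpa using hpW) tc htc
  have hRU : ∀ s : ZMod a, ∃ i : Fin 5, (s + ((i : ℕ) : ZMod a), p.2) ∈ U := by
    intro s
    by_contra h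
    push_neg at h
    exact hR ⟨s, h⟩
  obtain ⟨E2, E3, hE2U, hE3U, hE23, hE2p, hE3p⟩ :=
    lemC ha (fun z => (z, p.2) ∈ U) hRU p.1
  have hUeq : U = {p, (E2, p.2), (E3, p.2), (p.1, Nc), (p.1, Nd)} :=
    eq_of_five hU hpU hE2U hE3U hNcU hNdU
      (fun h => hE2p (congrArg Prod.fst h).symm)
      (fun h => hE3p (congrArg Prod.fst h).symm)
      (fun h => hNcp (congrArg Prod.snd h).symm)
      (fun h => hNdp (congrArg Prod.snd h).symm)
      (pair_ne_left hE23) (pair_ne_left hE2p) (pair_ne_left hE2p)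
      (pair_ne_left hE3p) (pair_ne_left hE3p) (pair_ne_right hNcd)
  have hAW : (E2, p.2) ∈ W := by
    apply right_exposed (fun z => (E2, z) ∈ U) (fun z => (E2, z) ∈ W) (fun s => Hv E2 s) p.2 hE2U
    intro i hmem
    rw [hUeq] at hmem
    simp only [mem_insert, mem_singleton, Prod.ext_iff] at hmem
    rcases hmem with ⟨h1, h2⟩ | ⟨h1, h2⟩ | ⟨h1, h2⟩ | ⟨h1, h2⟩ | ⟨h1, h2⟩
    exacts [hE2p h1, add_one_nat_ne hb p.2 i h2, hE23 h1, hE2p h1, hE2p h1]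
  have hBW : (E3, p.2) ∈ W := by
    apply right_exposed (fun z => (E3, z) ∈ U) (fun z => (E3, z) ∈ W) (fun s => Hv E3 s) p.2 hE3U
    intro i hmem
    rw [hUeq] at hmem
    simp only [mem_insert, mem_singleton, Prod.ext_iff] at hmem
    rcases hmem with ⟨h1, h2⟩ | ⟨h1, h2⟩ | ⟨h1, h2⟩ | ⟨h1, h2⟩ | ⟨h1, h2⟩
    exacts [hE3p h1, (hE23 h1.symm), add_one_nat_ne hb p.2 i h2, hE3p h1, hE3p h1]
  have hsub4 : ¬ W ⊆ ({(E2, p.2), (E3, p.2), (p.1, Nc), (p.1, Nd)} : Finset (ZMod a × ZMod b)) := by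
    intro hsub
    have h4 : ({(E2, p.2), (E3, p.2), (p.1, Nc), (p.1, Nd)} : Finset (ZMod a × ZMod b)).card = 4 :=
      card_four (pair_ne_left hE23) (pair_ne_left hE2p) (pair_ne_left hE2p)
        (pair_ne_left hE3p) (pair_ne_left hE3p) (pair_ne_right hNcd)
    have := Finset.card_le_card hsub
    omega
  obtain ⟨q, hqW, hqmem⟩ := Finset.not_subset.mp hsub4
  simp only [mem_insert, mem_singleton, not_or] at hqmem
  obtain ⟨hqA, hqB, hqC, hqD⟩ := hqmem
  have hqp : q ≠ p := fun h => hpW (h ▸ hqW)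
  have hWeq : W = {q, (E2, p.2), (E3, p.2), (p.1, Nc), (p.1, Nd)} :=
    eq_of_five hW hqW hAW hBW hNcW hNdW hqA hqB hqC hqD
      (pair_ne_left hE23) (pair_ne_left hE2p) (pair_ne_left hE2p)
      (pair_ne_left hE3p) (pair_ne_left hE3p) (pair_ne_right hNcd)
  have hRW : ∀ s : ZMod a, ∃ i : Fin 5, (s + ((i : ℕ) : ZMod a), p.2) ∈ W := by
    intro s
    by_contra h
    push_neg at h
    obtain ⟨i, hi⟩ := hRU s
    exact ((Hh s p.2).mpr h) i hi
  obtain ⟨s0, hs0⟩ := lemB' ha E2 E3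
  obtain ⟨i0, hi0⟩ := hRW s0
  have hgE2 : s0 + ((i0 : ℕ) : ZMod a) ≠ E2 := (hs0 i0).1
  have hgE3 : s0 + ((i0 : ℕ) : ZMod a) ≠ E3 := (hs0 i0).2
  have hq : q = (s0 + ((i0 : ℕ) : ZMod a), p.2) := by
    have hmem := hi0
    rw [hWeq] at hmem
    simp only [mem_insert, mem_singleton, Prod.ext_iff] at hmem
    rcases hmem with ⟨h1, h2⟩ | ⟨h1, h2⟩ | ⟨h1, h2⟩ | ⟨h1, h2⟩ | ⟨h1, h2⟩
    · exact Prod.ext_iff.mpr ⟨h1.symm, h2.symm⟩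
    · exact absurd h1 hgE2
    · exact absurd h1 hgE3
    · exact absurd h2.symm hNcp
    · exact absurd h2.symm hNdp
  have hgp1 : s0 + ((i0 : ℕ) : ZMod a) ≠ p.1 := by
    intro h
    apply hqp
    rw [hq, h]
  have hcol : ∀ i : Fin 5, (s0 + ((i0 : ℕ) : ZMod a), p.2 + ((i : ℕ) : ZMod b)) ∉ U := by
    intro i hmem
    rw [hUeq] at hmem
    simp only [mem_insert, mem_singleton, Prod.ext_iff] at hmem
    rcases hmem with ⟨h1, h2⟩ | ⟨h1, h2⟩ | ⟨h1, h2⟩ | ⟨h1, h2⟩ | ⟨h1, h2⟩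
    exacts [hgp1 h1, hgE2 h1, hgE3 h1, hgp1 h1, hgp1 h1]
  have hnW := (Hv (s0 + ((i0 : ℕ) : ZMod a)) p.2).mp hcol ⟨0, by omega⟩
  apply hnW
  rw [show (((⟨0, by omega⟩ : Fin 5) : ℕ) : ZMod b) = 0 from by norm_num, add_zero, ← hq]
  exact hqW

/-- Case: both the row and the column of `p` have a window missing `U`. -/
lemma case_open (ha : 13 ≤ a) (hb : 13 ≤ b)
    {U W : Finset (ZMod a × ZMod b)} (hU : U.card = 5) (hW : W.card = 5)
    (Hh : ∀ (x : ZMod a) (y : ZMod b),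
      (∀ i : Fin 5, (x + ((i : ℕ) : ZMod a), y) ∉ U) ↔
      (∀ i : Fin 5, (x + ((i : ℕ) : ZMod a), y) ∉ W))
    (Hv : ∀ (x : ZMod a) (y : ZMod b),
      (∀ i : Fin 5, (x, y + ((i : ℕ) : ZMod b)) ∉ U) ↔
      (∀ i : Fin 5, (x, y + ((i : ℕ) : ZMod b)) ∉ W))
    {p : ZMod a × ZMod b} (hpU : p ∈ U) (hpW : p ∉ W)
    (hR : ∃ t : ZMod a, ∀ i : Fin 5, (t + ((i : ℕ) : ZMod a), p.2) ∉ U)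
    (hC : ∃ t : ZMod b, ∀ i : Fin 5, (p.1, t + ((i : ℕ) : ZMod b)) ∉ U) : False := by
  obtain ⟨tr, htr⟩ := hR
  obtain ⟨tc, htc⟩ := hC
  obtain ⟨Ma, Mb, hMaU, hMaW, hMbU, hMbW, hMab, hMap, hMbp⟩ :=
    lemA ha (fun z => (z, p.2) ∈ U) (fun z => (z, p.2) ∈ W)
      (fun s => Hh s p.2) p.1 (by simpa using hpU) (by simpa using hpW) tr htr
  obtain ⟨Nc, Nd, hNcU, hNcW, hNdU, hNdW, hNcd, hNcp, hNdp⟩ :=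
    lemA hb (fun z => (p.1, z) ∈ U) (fun z => (p.1, z) ∈ W)
      (fun s => Hv p.1 s) p.2 (by simpa using hpU) (by simpa using hpW) tc htc
  have hUeq : U = {p, (Ma, p.2), (Mb, p.2), (p.1, Nc), (p.1, Nd)} :=
    eq_of_five hU hpU hMaU hMbU hNcU hNdU
      (fun h => hMap (congrArg Prod.fst h).symm)
      (fun h => hMbp (congrArg Prod.fst h).symm)
      (fun h => hNcp (congrArg Prod.snd h).symm)
      (fun h => hNdp (congrArg Prod.snd h).symm)
      (pair_ne_left hMab) (pair_ne_left hMap) (pair_ne_left hMap)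
      (pair_ne_left hMbp) (pair_ne_left hMbp) (pair_ne_right hNcd)
  have hnsub : ¬ W ⊆ U := by
    intro hsub
    have hWU := Finset.eq_of_subset_of_card_le hsub (le_of_eq (hU.trans hW.symm))
    rw [← hWU] at hpU
    exact hpW hpU
  obtain ⟨q, hqW, hqU⟩ := Finset.not_subset.mp hnsub
  have hq2 : q.2 = p.2 := by
    by_cases hfW : ∃ t : ZMod a, ∀ i : Fin 5, (t + ((i : ℕ) : ZMod a), q.2) ∉ W
    · obtain ⟨tq, htq⟩ := hfW
      obtain ⟨M1, M2, h1W, h1U, h2W, h2U, h12, h1q, h2q⟩ :=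
        lemA ha (fun z => (z, q.2) ∈ W) (fun z => (z, q.2) ∈ U)
          (fun s => (Hh s q.2).symm) q.1 (by simpa using hqW) (by simpa using hqU) tq htq
      have hm1 := h1U
      have hm2 := h2U
      rw [hUeq] at hm1 hm2
      simp only [mem_insert, mem_singleton, Prod.ext_iff] at hm1 hm2
      rcases hm1 with ⟨e1, e2⟩ | ⟨e1, e2⟩ | ⟨e1, e2⟩ | ⟨e1, e2⟩ | ⟨e1, e2⟩ <;>
        rcases hm2 with ⟨f1, f2⟩ | ⟨f1, f2⟩ | ⟨f1, f2⟩ | ⟨f1, f2⟩ | ⟨f1, f2⟩ <;>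
        first
          | exact e2
          | exact f2
          | exact absurd (e1.trans f1.symm) h12
    · have hfU : ∀ s : ZMod a, ∃ i : Fin 5, (s + ((i : ℕ) : ZMod a), q.2) ∈ U := by
        intro s
        by_contra h
        push_neg at h
        exact hfW ⟨s, (Hh s q.2).mp h⟩
      obtain ⟨x1, x2, x3, hx1, hx2, hx3, h12, h13, h23⟩ := lemC3 ha (fun z => (z, q.2) ∈ U) hfU
      by_contra hne
      have hforce : ∀ x : ZMod a, (x, q.2) ∈ U → x = p.1 := by
        intro x hx
        rw [hUeq] at hx
        simp only [mem_insert, mem_singleton, Prod.ext_iff] at hx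
        rcases hx with ⟨e1, e2⟩ | ⟨e1, e2⟩ | ⟨e1, e2⟩ | ⟨e1, e2⟩ | ⟨e1, e2⟩
        exacts [absurd e2 hne, absurd e2 hne, absurd e2 hne, e1, e1]
      exact h12 ((hforce x1 hx1).trans (hforce x2 hx2).symm)
  have hq1 : q.1 = p.1 := by
    by_cases hfW : ∃ t : ZMod b, ∀ i : Fin 5, (q.1, t + ((i : ℕ) : ZMod b)) ∉ W
    · obtain ⟨tq, htq⟩ := hfW
      obtain ⟨N1, N2, h1W, h1U, h2W, h2U, h12, h1q, h2q⟩ :=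
        lemA hb (fun z => (q.1, z) ∈ W) (fun z => (q.1, z) ∈ U)
          (fun s => (Hv q.1 s).symm) q.2 (by simpa using hqW) (by simpa using hqU) tq htq
      have hm1 := h1U
      have hm2 := h2U
      rw [hUeq] at hm1 hm2
      simp only [mem_insert, mem_singleton, Prod.ext_iff] at hm1 hm2
      rcases hm1 with ⟨e1, e2⟩ | ⟨e1, e2⟩ | ⟨e1, e2⟩ | ⟨e1, e2⟩ | ⟨e1, e2⟩ <;>
        rcases hm2 with ⟨f1, f2⟩ | ⟨f1, f2⟩ | ⟨f1, f2⟩ | ⟨f1, f2⟩ | ⟨f1, f2⟩ <;>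
        first
          | exact e1
          | exact f1
          | exact absurd (e2.trans f2.symm) h12
    · have hfU : ∀ s : ZMod b, ∃ i : Fin 5, (q.1, s + ((i : ℕ) : ZMod b)) ∈ U := by
        intro s
        by_contra h
        push_neg at h
        exact hfW ⟨s, (Hv q.1 s).mp h⟩
      obtain ⟨y1, y2, y3, hy1, hy2, hy3, h12, h13, h23⟩ := lemC3 hb (fun z => (q.1, z) ∈ U) hfU
      by_contra hne
      have hforce : ∀ z : ZMod b, (q.1, z) ∈ U → z = p.2 := by
        intro z hz
        rw [hUeq] at hz
        simp only [mem_insert, mem_singleton, Prod.ext_iff] at hz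
        rcases hz with ⟨e1, e2⟩ | ⟨e1, e2⟩ | ⟨e1, e2⟩ | ⟨e1, e2⟩ | ⟨e1, e2⟩
        exacts [absurd e1 hne, e2, e2, absurd e1 hne, absurd e1 hne]
      exact h12 ((hforce y1 hy1).trans (hforce y2 hy2).symm)
  exact hpW (Prod.ext_iff.mpr ⟨hq1, hq2⟩ ▸ hqW)

lemma aux (ha : 13 ≤ a) (hb : 13 ≤ b)
    {U W : Finset (ZMod a × ZMod b)} (hU : U.card = 5) (hW : W.card = 5)
    (Hh : ∀ (x : ZMod a) (y : ZMod b),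
      (∀ i : Fin 5, (x + ((i : ℕ) : ZMod a), y) ∉ U) ↔
      (∀ i : Fin 5, (x + ((i : ℕ) : ZMod a), y) ∉ W))
    (Hv : ∀ (x : ZMod a) (y : ZMod b),
      (∀ i : Fin 5, (x, y + ((i : ℕ) : ZMod b)) ∉ U) ↔
      (∀ i : Fin 5, (x, y + ((i : ℕ) : ZMod b)) ∉ W))
    {p : ZMod a × ZMod b} (hpU : p ∈ U) (hpW : p ∉ W) : False := by
  by_cases hR : ∃ t : ZMod a, ∀ i : Fin 5, (t + ((i : ℕ) : ZMod a), p.2) ∉ U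
  · by_cases hC : ∃ t : ZMod b, ∀ i : Fin 5, (p.1, t + ((i : ℕ) : ZMod b)) ∉ U
    · exact case_open ha hb hU hW Hh Hv hpU hpW hR hC
    · -- row open, column full: apply `case_mixed` to the transposed configuration
      refine case_mixed hb ha
        (U := U.image Prod.swap) (W := W.image Prod.swap)
        ?_ ?_ ?_ ?_ (p := (p.2, p.1)) ?_ ?_ ?_ ?_
      · rw [Finset.card_image_of_injective _ Prod.swap_injective]; exact hU
      · rw [Finset.card_image_of_injective _ Prod.swap_injective]; exact hW
      · intro x y
        simp only [mem_swapF]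
        exact Hv y x
      · intro x y
        simp only [mem_swapF]
        exact Hh y x
      · rw [mem_swapF]; exact hpU
      · rw [mem_swapF]; exact hpW
      · simp only [mem_swapF]
        exact hC
      · simp only [mem_swapF]
        exact hR
  · by_cases hC : ∃ t : ZMod b, ∀ i : Fin 5, (p.1, t + ((i : ℕ) : ZMod b)) ∉ U
    · exact case_mixed ha hb hU hW Hh Hv hpU hpW hR hC
    · exact case_full ha hb hW Hh Hv hpW hR hC

theorem mainCombin (ha : 13 ≤ a) (hb : 13 ≤ b)
    {U W : Finset (ZMod a × ZMod b)} (hU : U.card = 5) (hW : W.card = 5)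
    (Hh : ∀ (x : ZMod a) (y : ZMod b),
      (∀ i : Fin 5, (x + ((i : ℕ) : ZMod a), y) ∉ U) ↔
      (∀ i : Fin 5, (x + ((i : ℕ) : ZMod a), y) ∉ W))
    (Hv : ∀ (x : ZMod a) (y : ZMod b),
      (∀ i : Fin 5, (x, y + ((i : ℕ) : ZMod b)) ∉ U) ↔
      (∀ i : Fin 5, (x, y + ((i : ℕ) : ZMod b)) ∉ W)) : U = W := by
  by_cases hsub : U ⊆ W
  · exact Finset.eq_of_subset_of_card_le hsub (le_of_eq (hW.trans hU.symm))
  · obtain ⟨p, hpU, hpW⟩ := Finset.not_subset.mp hsub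
    exact absurd (aux ha hb hU hW Hh Hv hpU hpW) not_false

lemma card_pathH (ha : 13 ≤ a) (x : ZMod a) (y : ZMod b) :
    (Finset.image (fun i : Fin 5 => (x + ((i : ℕ) : ZMod a), y)) Finset.univ).card = 5 := by
  have hinj : Function.Injective (fun i : Fin 5 => (x + ((i : ℕ) : ZMod a), y)) := by
    intro i j h
    simp only [Prod.mk.injEq] at h
    have h2 : ((i : ℕ) : ZMod a) = ((j : ℕ) : ZMod a) := add_left_cancel h.1
    exact Fin.ext (cast_inj13 ha (by have := i.isLt; omega) (by have := j.isLt; omega) h2)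
  rw [Finset.card_image_of_injective _ hinj, Finset.card_univ, Fintype.card_fin]

lemma card_pathV (hb : 13 ≤ b) (x : ZMod a) (y : ZMod b) :
    (Finset.image (fun j : Fin 5 => (x, y + ((j : ℕ) : ZMod b))) Finset.univ).card = 5 := by
  have hinj : Function.Injective (fun j : Fin 5 => (x, y + ((j : ℕ) : ZMod b))) := by
    intro i j h
    simp only [Prod.mk.injEq] at h
    have h2 : ((i : ℕ) : ZMod b) = ((j : ℕ) : ZMod b) := add_left_cancel h.2
    exact Fin.ext (cast_inj13 hb (by have := i.isLt; omega) (by have := j.isLt; omega) h2)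
  rw [Finset.card_image_of_injective _ hinj, Finset.card_univ, Fintype.card_fin]

lemma dist_ne {V : Type*} [DecidableEq V] (u v P : {s : Finset V // s.card = 5})
    (hdisj : Disjoint P.1 v.1) (z : V) (hzP : z ∈ P.1) (hzu : z ∈ u.1) :
    (kneserGraphOn V 5).dist u P ≠ (kneserGraphOn V 5).dist v P := by
  have hvP : v ≠ P := by
    intro h
    subst h
    have hempty : v.1 = ∅ := by
      have := disjoint_self.mp hdisj
      simpa using this
    have := v.2
    rw [hempty] at this
    simp at this
  have h1 : (kneserGraphOn V 5).dist v P = 1 :=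
    SimpleGraph.dist_eq_one_iff_adj.mpr ⟨hvP, hdisj.symm⟩
  rw [h1]
  intro h
  have hadj := SimpleGraph.dist_eq_one_iff_adj.mp h
  exact Finset.disjoint_left.mp hadj.2 hzu hzP

end TGK5

open TGK5 Finset

/-- For `a, b ≥ 13` and `n = ab`, the collection of all straight paths with 5
vertices in the toroidal grid `C_a □ C_b` is a resolving set for the Kneser graph
`K(n,5)` on the ground set `(ℤ/aℤ) × (ℤ/bℤ)`; consequently `β(K(n,5)) ≤ 2n`. -/
theorem toroidal_grid_resolving_kneser_5 (a b : ℕ) (ha : 13 ≤ a) (hb : 13 ≤ b) :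
    resolvingSet (kneserGraphOn (ZMod a × ZMod b) 5)
      {X | ∃ (x : ZMod a) (y : ZMod b),
        X.1 = Finset.image (fun i : Fin 5 => (x + (i : ℕ), y)) Finset.univ ∨
        X.1 = Finset.image (fun j : Fin 5 => (x, y + (j : ℕ))) Finset.univ} ∧
    metricDim (kneserGraphOn (ZMod a × ZMod b) 5) ≤ 2 * (a * b) := by
  classical
  haveI : NeZero a := ⟨by omega⟩
  haveI : NeZero b := ⟨by omega⟩
  have key : ∀ u v : {s : Finset (ZMod a × ZMod b) // s.card = 5}, u ≠ v →
      ∃ (P : {s : Finset (ZMod a × ZMod b) // s.card = 5}) (x : ZMod a) (y : ZMod b),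
        (P.1 = Finset.image (fun i : Fin 5 => (x + ((i : ℕ) : ZMod a), y)) Finset.univ ∨
         P.1 = Finset.image (fun j : Fin 5 => (x, y + ((j : ℕ) : ZMod b))) Finset.univ) ∧
        (kneserGraphOn (ZMod a × ZMod b) 5).dist u P ≠
          (kneserGraphOn (ZMod a × ZMod b) 5).dist v P := by
    intro u v huv
    have hUW : u.1 ≠ v.1 := fun h => huv (Subtype.ext h)
    by_cases hHh : ∀ (x : ZMod a) (y : ZMod b),
        (∀ i : Fin 5, (x + ((i : ℕ) : ZMod a), y) ∉ u.1) ↔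
        (∀ i : Fin 5, (x + ((i : ℕ) : ZMod a), y) ∉ v.1)
    · by_cases hHv : ∀ (x : ZMod a) (y : ZMod b),
          (∀ i : Fin 5, (x, y + ((i : ℕ) : ZMod b)) ∉ u.1) ↔
          (∀ i : Fin 5, (x, y + ((i : ℕ) : ZMod b)) ∉ v.1)
      · exact absurd (mainCombin ha hb u.2 v.2 hHh hHv) hUW
      · -- some vertical window distinguishes
        push_neg at hHv
        obtain ⟨x, y, hxy⟩ := hHv
        rcases hxy with ⟨hmiss, i, hi⟩ | ⟨⟨i, hi⟩, hB⟩
        · refine ⟨⟨_, card_pathV hb x y⟩, x, y, Or.inr rfl, ?_⟩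
          have hdisj : Disjoint (Finset.image (fun j : Fin 5 => (x, y + ((j : ℕ) : ZMod b)))
              Finset.univ) u.1 := by
            rw [Finset.disjoint_left]
            intro z hz
            obtain ⟨j, -, rfl⟩ := Finset.mem_image.mp hz
            exact hmiss j
          exact (dist_ne v u _ hdisj _ (Finset.mem_image.mpr ⟨i, Finset.mem_univ i, rfl⟩) hi).symm
        · refine ⟨⟨_, card_pathV hb x y⟩, x, y, Or.inr rfl, ?_⟩
          have hdisj : Disjoint (Finset.image (fun j : Fin 5 => (x, y + ((j : ℕ) : ZMod b)))
              Finset.univ) v.1 := by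
            rw [Finset.disjoint_left]
            intro z hz
            obtain ⟨j, -, rfl⟩ := Finset.mem_image.mp hz
            exact hB j
          exact dist_ne u v _ hdisj _ (Finset.mem_image.mpr ⟨i, Finset.mem_univ i, rfl⟩) hi
    · push_neg at hHh
      obtain ⟨x, y, hxy⟩ := hHh
      rcases hxy with ⟨hmiss, i, hi⟩ | ⟨⟨i, hi⟩, hB⟩
      · refine ⟨⟨_, card_pathH ha x y⟩, x, y, Or.inl rfl, ?_⟩
        have hdisj : Disjoint (Finset.image (fun i : Fin 5 => (x + ((i : ℕ) : ZMod a), y))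
            Finset.univ) u.1 := by
          rw [Finset.disjoint_left]
          intro z hz
          obtain ⟨j, -, rfl⟩ := Finset.mem_image.mp hz
          exact hmiss j
        exact (dist_ne v u _ hdisj _ (Finset.mem_image.mpr ⟨i, Finset.mem_univ i, rfl⟩) hi).symm
      · refine ⟨⟨_, card_pathH ha x y⟩, x, y, Or.inl rfl, ?_⟩
        have hdisj : Disjoint (Finset.image (fun i : Fin 5 => (x + ((i : ℕ) : ZMod a), y))
            Finset.univ) v.1 := by
          rw [Finset.disjoint_left]
          intro z hz
          obtain ⟨j, -, rfl⟩ := Finset.mem_image.mp hz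
          exact hB j
        exact dist_ne u v _ hdisj _ (Finset.mem_image.mpr ⟨i, Finset.mem_univ i, rfl⟩) hi
  constructor
  · intro u v huv
    obtain ⟨P, x, y, hor, hdist⟩ := key u v huv
    exact ⟨P, ⟨x, y, hor⟩, hdist⟩
  · set S1 : Finset {s : Finset (ZMod a × ZMod b) // s.card = 5} :=
      Finset.univ.image (fun z : ZMod a × ZMod b =>
        ⟨Finset.image (fun i : Fin 5 => (z.1 + ((i : ℕ) : ZMod a), z.2)) Finset.univ,
          card_pathH ha z.1 z.2⟩) with hS1
    set S2 : Finset {s : Finset (ZMod a × ZMod b) // s.card = 5} :=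
      Finset.univ.image (fun z : ZMod a × ZMod b =>
        ⟨Finset.image (fun j : Fin 5 => (z.1, z.2 + ((j : ℕ) : ZMod b))) Finset.univ,
          card_pathV hb z.1 z.2⟩) with hS2
    have hres : resolvingSet (kneserGraphOn (ZMod a × ZMod b) 5) ↑(S1 ∪ S2) := by
      intro u v huv
      obtain ⟨P, x, y, hor, hdist⟩ := key u v huv
      refine ⟨P, ?_, hdist⟩
      rw [Finset.mem_coe, Finset.mem_union]
      rcases hor with h | h
      · exact Or.inl (Finset.mem_image.mpr ⟨(x, y), Finset.mem_univ _, Subtype.ext h.symm⟩)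
      · exact Or.inr (Finset.mem_image.mpr ⟨(x, y), Finset.mem_univ _, Subtype.ext h.symm⟩)
    have hcard : (S1 ∪ S2).card ≤ 2 * (a * b) := by
      have h1 := Finset.card_union_le S1 S2
      have h2 : S1.card ≤ (Finset.univ : Finset (ZMod a × ZMod b)).card := by
        rw [hS1]; exact Finset.card_image_le
      have h3 : S2.card ≤ (Finset.univ : Finset (ZMod a × ZMod b)).card := by
        rw [hS2]; exact Finset.card_image_le
      have huniv : (Finset.univ : Finset (ZMod a × ZMod b)).card = a * b := by
        rw [Finset.card_univ, Fintype.card_prod, ZMod.card, ZMod.card]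
      omega
    exact le_trans (Nat.sInf_le ⟨S1 ∪ S2, hres, rfl⟩) hcard
end

section
/- Let a, b ≥ 16 be integers and n = ab. Identify the n-element set with V = (ℤ/aℤ) × (ℤ/bℤ). Then the collection of all straight paths with 6 vertices in the toroidal grid C_a □ C_b — i.e., all sets of the form {(x+i, y) : i = 0,...,5} or {(x, y+j) : j = 0,...,5} for (x,y) ∈ V — is a resolving set for the Kneser graph K(n,6) on the ground set V. Consequently β(K(n,6)) ≤ 2n for such n. -/
namespace KneserTorus

lemma cast_ne_zero {n : ℕ} (hn : 16 ≤ n) {c : ℕ} (h1 : 1 ≤ c) (h2 : c ≤ 12) :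
    (c : ZMod n) ≠ 0 := by
  haveI : NeZero n := ⟨by omega⟩
  intro h
  have hv : (c : ZMod n).val = c := ZMod.val_natCast_of_lt (by omega)
  rw [h, ZMod.val_zero] at hv
  omega

lemma add_ne_self {n : ℕ} (hn : 16 ≤ n) (x : ZMod n) {c : ℕ} (h1 : 1 ≤ c) (h2 : c ≤ 12) :
    x + (c : ZMod n) ≠ x := by
  intro h
  exact cast_ne_zero hn h1 h2 (by linear_combination h)

lemma sub_ne_self {n : ℕ} (hn : 16 ≤ n) (x : ZMod n) {c : ℕ} (h1 : 1 ≤ c) (h2 : c ≤ 12) :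
    x - (c : ZMod n) ≠ x := by
  intro h
  exact cast_ne_zero hn h1 h2 (by linear_combination -h)

lemma add_ne_sub {n : ℕ} (hn : 16 ≤ n) (x : ZMod n) {c d : ℕ} (h1 : 1 ≤ c) (h2 : c ≤ 6)
    (h3 : 1 ≤ d) (h4 : d ≤ 6) : x + (c : ZMod n) ≠ x - (d : ZMod n) := by
  intro h
  apply cast_ne_zero hn (c := c + d) (by omega) (by omega)
  push_cast
  linear_combination h

lemma add_ne_add {n : ℕ} (hn : 16 ≤ n) (x : ZMod n) {c d : ℕ} (h2 : c ≤ 12) (h4 : d ≤ 12)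
    (hne : c ≠ d) : x + (c : ZMod n) ≠ x + (d : ZMod n) := by
  intro h
  rcases Nat.lt_or_ge c d with hlt | hge
  · apply cast_ne_zero hn (c := d - c) (by omega) (by omega)
    push_cast [Nat.cast_sub hlt.le]
    linear_combination -h
  · have hlt : d < c := by omega
    apply cast_ne_zero hn (c := c - d) (by omega) (by omega)
    push_cast [Nat.cast_sub hlt.le]
    linear_combination h

lemma sub_ne_sub {n : ℕ} (hn : 16 ≤ n) (x : ZMod n) {c d : ℕ} (h2 : c ≤ 12) (h4 : d ≤ 12)
    (hne : c ≠ d) : x - (c : ZMod n) ≠ x - (d : ZMod n) := by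
  intro h
  rcases Nat.lt_or_ge c d with hlt | hge
  · apply cast_ne_zero hn (c := d - c) (by omega) (by omega)
    push_cast [Nat.cast_sub hlt.le]
    linear_combination h
  · have hlt : d < c := by omega
    apply cast_ne_zero hn (c := c - d) (by omega) (by omega)
    push_cast [Nat.cast_sub hlt.le]
    linear_combination -h

lemma ne_fst {α β : Type*} {x x' : α} {y y' : β} (h : x ≠ x') : (x, y) ≠ (x', y') :=
  fun he => h (congrArg Prod.fst he)

lemma ne_snd {α β : Type*} {x x' : α} {y y' : β} (h : y ≠ y') : (x, y) ≠ (x', y') :=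
  fun he => h (congrArg Prod.snd he)

lemma oneD_right {n : ℕ} (PU PW : ZMod n → Prop)
    (hit : ∀ x : ZMod n, (∃ i : Fin 6, PU (x + (i : ℕ))) ↔ (∃ i : Fin 6, PW (x + (i : ℕ))))
    {x : ZMod n} (hU : PU x) (hW : ¬ PW x) :
    ∃ c : ℕ, 1 ≤ c ∧ c ≤ 6 ∧ PU (x + (c : ℕ)) := by
  by_contra hno
  push_neg at hno
  have hUe : ∀ i : Fin 6, ¬ PU (x + 1 + ((i : ℕ) : ZMod n)) := by
    intro i hi
    refine hno (1 + (i : ℕ)) (by omega) (by omega) ?_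
    have : (((1 + (i : ℕ) : ℕ)) : ZMod n) = 1 + ((i : ℕ) : ZMod n) := by push_cast; ring
    rw [this, ← add_assoc]
    exact hi
  have hWe : ∀ i : Fin 6, ¬ PW (x + 1 + ((i : ℕ) : ZMod n)) := by
    intro i hi
    obtain ⟨j, hj⟩ := (hit (x + 1)).2 ⟨i, hi⟩
    exact hUe j hj
  obtain ⟨j, hj⟩ := (hit x).1 ⟨0, by simpa using hU⟩
  have hjlt : (j : ℕ) < 6 := j.isLt
  have hj0 : (j : ℕ) ≠ 0 := by
    intro h0
    rw [h0] at hj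
    apply hW
    simpa using hj
  apply hWe ⟨(j : ℕ) - 1, by omega⟩
  show PW (x + 1 + (((j : ℕ) - 1 : ℕ) : ZMod n))
  have : x + 1 + (((j : ℕ) - 1 : ℕ) : ZMod n) = x + ((j : ℕ) : ZMod n) := by
    push_cast [Nat.cast_sub (by omega : 1 ≤ (j : ℕ))]
    ring
  rw [this]
  exact hj

lemma oneD_left {n : ℕ} (PU PW : ZMod n → Prop)
    (hit : ∀ x : ZMod n, (∃ i : Fin 6, PU (x + (i : ℕ))) ↔ (∃ i : Fin 6, PW (x + (i : ℕ))))
    {x : ZMod n} (hU : PU x) (hW : ¬ PW x) :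
    ∃ c : ℕ, 1 ≤ c ∧ c ≤ 6 ∧ PU (x - (c : ℕ)) := by
  by_contra hno
  push_neg at hno
  have hUe : ∀ i : Fin 6, ¬ PU (x - 6 + ((i : ℕ) : ZMod n)) := by
    intro i hi
    refine hno (6 - (i : ℕ)) (by omega) (by omega) ?_
    have : x - ((6 - (i : ℕ) : ℕ) : ZMod n) = x - 6 + ((i : ℕ) : ZMod n) := by
      push_cast [Nat.cast_sub (by omega : (i : ℕ) ≤ 6)]
      ring
    rw [this]
    exact hi
  have hWe : ∀ i : Fin 6, ¬ PW (x - 6 + ((i : ℕ) : ZMod n)) := by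
    intro i hi
    obtain ⟨j, hj⟩ := (hit (x - 6)).2 ⟨i, hi⟩
    exact hUe j hj
  obtain ⟨j, hj⟩ := (hit (x - 5)).1 ⟨⟨5, by omega⟩, by
    show PU (x - 5 + ((5 : ℕ) : ZMod n))
    have : x - 5 + ((5 : ℕ) : ZMod n) = x := by push_cast; ring
    rw [this]; exact hU⟩
  have hjlt : (j : ℕ) < 6 := j.isLt
  have hj5 : (j : ℕ) ≠ 5 := by
    intro h5
    have : x - 5 + ((j : ℕ) : ZMod n) = x := by rw [h5]; push_cast; ring
    rw [this] at hj
    exact hW hj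
  apply hWe ⟨(j : ℕ) + 1, by omega⟩
  show PW (x - 6 + (((j : ℕ) + 1 : ℕ) : ZMod n))
  have : x - 6 + (((j : ℕ) + 1 : ℕ) : ZMod n) = x - 5 + ((j : ℕ) : ZMod n) := by
    push_cast
    ring
  rw [this]
  exact hj



variable {a b : ℕ}

def Hp (x : ZMod a) (y : ZMod b) : Finset (ZMod a × ZMod b) :=
  Finset.image (fun i : Fin 6 => (x + (i : ℕ), y)) Finset.univ

def Vp (x : ZMod a) (y : ZMod b) : Finset (ZMod a × ZMod b) :=
  Finset.image (fun j : Fin 6 => (x, y + (j : ℕ))) Finset.univ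

lemma mem_Hp {x : ZMod a} {y : ZMod b} {p : ZMod a × ZMod b} :
    p ∈ Hp x y ↔ ∃ i : Fin 6, (x + ((i : ℕ) : ZMod a), y) = p := by
  simp [Hp]

lemma mem_Vp {x : ZMod a} {y : ZMod b} {p : ZMod a × ZMod b} :
    p ∈ Vp x y ↔ ∃ j : Fin 6, (x, y + ((j : ℕ) : ZMod b)) = p := by
  simp [Vp]

lemma card_Hp (ha : 16 ≤ a) (x : ZMod a) (y : ZMod b) : (Hp x y).card = 6 := by
  rw [Hp, Finset.card_image_of_injective _ ?_, Finset.card_univ, Fintype.card_fin]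
  intro i j h
  have h1 : x + ((i : ℕ) : ZMod a) = x + ((j : ℕ) : ZMod a) := congrArg Prod.fst h
  have h2 : ((i : ℕ) : ZMod a) = ((j : ℕ) : ZMod a) := by
    exact add_left_cancel h1
  have hv : ((i : ℕ) : ZMod a).val = (i : ℕ) := ZMod.val_natCast_of_lt (by omega)
  have hv' : ((j : ℕ) : ZMod a).val = (j : ℕ) := ZMod.val_natCast_of_lt (by omega)
  have : (i : ℕ) = (j : ℕ) := by rw [← hv, ← hv', h2]
  exact Fin.ext this

lemma card_Vp (hb : 16 ≤ b) (x : ZMod a) (y : ZMod b) : (Vp x y).card = 6 := by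
  rw [Vp, Finset.card_image_of_injective _ ?_, Finset.card_univ, Fintype.card_fin]
  intro i j h
  have h1 : y + ((i : ℕ) : ZMod b) = y + ((j : ℕ) : ZMod b) := congrArg Prod.snd h
  have h2 : ((i : ℕ) : ZMod b) = ((j : ℕ) : ZMod b) := add_left_cancel h1
  have hv : ((i : ℕ) : ZMod b).val = (i : ℕ) := ZMod.val_natCast_of_lt (by omega)
  have hv' : ((j : ℕ) : ZMod b).val = (j : ℕ) := ZMod.val_natCast_of_lt (by omega)
  have : (i : ℕ) = (j : ℕ) := by rw [← hv, ← hv', h2]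
  exact Fin.ext this

/-- "U and W are hit by exactly the same straight 6-paths." -/
def HitEq (U W : Finset (ZMod a × ZMod b)) : Prop :=
  ∀ (x : ZMod a) (y : ZMod b),
    ((∃ i : Fin 6, (x + ((i : ℕ) : ZMod a), y) ∈ U) ↔
      (∃ i : Fin 6, (x + ((i : ℕ) : ZMod a), y) ∈ W)) ∧
    ((∃ j : Fin 6, (x, y + ((j : ℕ) : ZMod b)) ∈ U) ↔
      (∃ j : Fin 6, (x, y + ((j : ℕ) : ZMod b)) ∈ W))

lemma HitEq.symm {U W : Finset (ZMod a × ZMod b)} (h : HitEq U W) : HitEq W U :=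
  fun x y => ⟨(h x y).1.symm, (h x y).2.symm⟩

/-- The cross lemma: a point of `U \ W` has `U`-points nearby on all four sides. -/
lemma cross {U W : Finset (ZMod a × ZMod b)} (hit : HitEq U W)
    {x : ZMod a} {y : ZMod b} (hU : (x, y) ∈ U) (hW : (x, y) ∉ W) :
    ∃ c1 c2 c3 c4 : ℕ,
      (1 ≤ c1 ∧ c1 ≤ 6) ∧ (1 ≤ c2 ∧ c2 ≤ 6) ∧ (1 ≤ c3 ∧ c3 ≤ 6) ∧ (1 ≤ c4 ∧ c4 ≤ 6) ∧
      (x + (c1 : ℕ), y) ∈ U ∧ (x - (c2 : ℕ), y) ∈ U ∧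
      (x, y + (c3 : ℕ)) ∈ U ∧ (x, y - (c4 : ℕ)) ∈ U := by
  obtain ⟨c1, h11, h12, h13⟩ :=
    oneD_right (fun t => (t, y) ∈ U) (fun t => (t, y) ∈ W) (fun t => (hit t y).1) hU hW
  obtain ⟨c2, h21, h22, h23⟩ :=
    oneD_left (fun t => (t, y) ∈ U) (fun t => (t, y) ∈ W) (fun t => (hit t y).1) hU hW
  obtain ⟨c3, h31, h32, h33⟩ :=
    oneD_right (fun t => (x, t) ∈ U) (fun t => (x, t) ∈ W) (fun t => (hit x t).2) hU hW
  obtain ⟨c4, h41, h42, h43⟩ :=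
    oneD_left (fun t => (x, t) ∈ U) (fun t => (x, t) ∈ W) (fun t => (hit x t).2) hU hW
  exact ⟨c1, c2, c3, c4, ⟨h11, h12⟩, ⟨h21, h22⟩, ⟨h31, h32⟩, ⟨h41, h42⟩, h13, h23, h33, h43⟩

lemma seven_le_card {α : Type*} [DecidableEq α] {U : Finset α} {p1 p2 p3 p4 p5 p6 p7 : α}
    (m1 : p1 ∈ U) (m2 : p2 ∈ U) (m3 : p3 ∈ U) (m4 : p4 ∈ U) (m5 : p5 ∈ U) (m6 : p6 ∈ U)
    (m7 : p7 ∈ U)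
    (h12 : p1 ≠ p2) (h13 : p1 ≠ p3) (h14 : p1 ≠ p4) (h15 : p1 ≠ p5) (h16 : p1 ≠ p6)
    (h17 : p1 ≠ p7) (h23 : p2 ≠ p3) (h24 : p2 ≠ p4) (h25 : p2 ≠ p5) (h26 : p2 ≠ p6)
    (h27 : p2 ≠ p7) (h34 : p3 ≠ p4) (h35 : p3 ≠ p5) (h36 : p3 ≠ p6) (h37 : p3 ≠ p7)
    (h45 : p4 ≠ p5) (h46 : p4 ≠ p6) (h47 : p4 ≠ p7) (h56 : p5 ≠ p6) (h57 : p5 ≠ p7)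
    (h67 : p6 ≠ p7) : 7 ≤ U.card := by
  have hsub : ({p1, p2, p3, p4, p5, p6, p7} : Finset α) ⊆ U := by
    intro z hz
    simp only [Finset.mem_insert, Finset.mem_singleton] at hz
    rcases hz with rfl | rfl | rfl | rfl | rfl | rfl | rfl <;> assumption
  have hc : ({p1, p2, p3, p4, p5, p6, p7} : Finset α).card = 7 := by
    rw [Finset.card_insert_of_notMem (by simp [h12, h13, h14, h15, h16, h17]),
        Finset.card_insert_of_notMem (by simp [h23, h24, h25, h26, h27]),
        Finset.card_insert_of_notMem (by simp [h34, h35, h36, h37]),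
        Finset.card_insert_of_notMem (by simp [h45, h46, h47]),
        Finset.card_insert_of_notMem (by simp [h56, h57]),
        Finset.card_insert_of_notMem (by simp [h67]),
        Finset.card_singleton]
  calc 7 = ({p1, p2, p3, p4, p5, p6, p7} : Finset α).card := hc.symm
    _ ≤ U.card := Finset.card_le_card hsub

lemma diff_subsingleton (ha : 16 ≤ a) (hb : 16 ≤ b) {U W : Finset (ZMod a × ZMod b)}
    (hUcard : U.card = 6) (hit : HitEq U W) :
    ∀ d1 ∈ U, ∀ d2 ∈ U, d1 ∉ W → d2 ∉ W → d1 = d2 := by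
  rintro ⟨x1, y1⟩ h1 ⟨x2, y2⟩ h2 hw1 hw2
  obtain ⟨c1, c2, c3, c4, hc1, hc2, hc3, hc4, ha1, ha2, hb1, hb2⟩ := cross hit h1 hw1
  obtain ⟨f1, f2, f3, f4, hf1, hf2, hf3, hf4, hA1, hA2, hB1, hB2⟩ := cross hit h2 hw2
  by_cases hy : y1 = y2
  · by_cases hx : x1 = x2
    · rw [hx, hy]
    · subst hy
      have h7 : 7 ≤ U.card :=
        seven_le_card h1 ha1 ha2 hb1 hb2 hB1 hB2
          (ne_fst (add_ne_self ha x1 hc1.1 (by omega)).symm)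
          (ne_fst (sub_ne_self ha x1 hc2.1 (by omega)).symm)
          (ne_snd (add_ne_self hb y1 hc3.1 (by omega)).symm)
          (ne_snd (sub_ne_self hb y1 hc4.1 (by omega)).symm)
          (ne_fst hx) (ne_fst hx)
          (ne_fst (add_ne_sub ha x1 hc1.1 hc1.2 hc2.1 hc2.2))
          (ne_snd (add_ne_self hb y1 hc3.1 (by omega)).symm)
          (ne_snd (sub_ne_self hb y1 hc4.1 (by omega)).symm)
          (ne_snd (add_ne_self hb y1 hf3.1 (by omega)).symm)
          (ne_snd (sub_ne_self hb y1 hf4.1 (by omega)).symm)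
          (ne_snd (add_ne_self hb y1 hc3.1 (by omega)).symm)
          (ne_snd (sub_ne_self hb y1 hc4.1 (by omega)).symm)
          (ne_snd (add_ne_self hb y1 hf3.1 (by omega)).symm)
          (ne_snd (sub_ne_self hb y1 hf4.1 (by omega)).symm)
          (ne_snd (add_ne_sub hb y1 hc3.1 hc3.2 hc4.1 hc4.2))
          (ne_fst hx) (ne_fst hx) (ne_fst hx) (ne_fst hx)
          (ne_snd (add_ne_sub hb y1 hf3.1 hf3.2 hf4.1 hf4.2))
      exact absurd h7 (by omega)
  · by_cases hx : x1 = x2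
    · subst hx
      have h7 : 7 ≤ U.card :=
        seven_le_card h1 hb1 hb2 ha1 ha2 hA1 hA2
          (ne_snd (add_ne_self hb y1 hc3.1 (by omega)).symm)
          (ne_snd (sub_ne_self hb y1 hc4.1 (by omega)).symm)
          (ne_fst (add_ne_self ha x1 hc1.1 (by omega)).symm)
          (ne_fst (sub_ne_self ha x1 hc2.1 (by omega)).symm)
          (ne_snd hy) (ne_snd hy)
          (ne_snd (add_ne_sub hb y1 hc3.1 hc3.2 hc4.1 hc4.2))
          (ne_fst (add_ne_self ha x1 hc1.1 (by omega)).symm)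
          (ne_fst (sub_ne_self ha x1 hc2.1 (by omega)).symm)
          (ne_fst (add_ne_self ha x1 hf1.1 (by omega)).symm)
          (ne_fst (sub_ne_self ha x1 hf2.1 (by omega)).symm)
          (ne_fst (add_ne_self ha x1 hc1.1 (by omega)).symm)
          (ne_fst (sub_ne_self ha x1 hc2.1 (by omega)).symm)
          (ne_fst (add_ne_self ha x1 hf1.1 (by omega)).symm)
          (ne_fst (sub_ne_self ha x1 hf2.1 (by omega)).symm)
          (ne_fst (add_ne_sub ha x1 hc1.1 hc1.2 hc2.1 hc2.2))
          (ne_snd hy) (ne_snd hy) (ne_snd hy) (ne_snd hy)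
          (ne_fst (add_ne_sub ha x1 hf1.1 hf1.2 hf2.1 hf2.2))
      exact absurd h7 (by omega)
    · by_cases hv : y1 + ((c3 : ℕ) : ZMod b) = y2
      · have hq1 : y1 - ((c4 : ℕ) : ZMod b) ≠ y1 := sub_ne_self hb y1 hc4.1 (by omega)
        have hq2 : y1 - ((c4 : ℕ) : ZMod b) ≠ y2 := by
          intro h
          exact add_ne_sub hb y1 hc3.1 hc3.2 hc4.1 hc4.2 (hv.trans h.symm)
        have h7 : 7 ≤ U.card :=
          seven_le_card h1 ha1 ha2 h2 hA1 hA2 hb2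
            (ne_fst (add_ne_self ha x1 hc1.1 (by omega)).symm)
            (ne_fst (sub_ne_self ha x1 hc2.1 (by omega)).symm)
            (ne_snd hy) (ne_snd hy) (ne_snd hy)
            (ne_snd hq1.symm)
            (ne_fst (add_ne_sub ha x1 hc1.1 hc1.2 hc2.1 hc2.2))
            (ne_snd hy) (ne_snd hy) (ne_snd hy)
            (ne_snd hq1.symm)
            (ne_snd hy) (ne_snd hy) (ne_snd hy)
            (ne_snd hq1.symm)
            (ne_fst (add_ne_self ha x2 hf1.1 (by omega)).symm)
            (ne_fst (sub_ne_self ha x2 hf2.1 (by omega)).symm)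
            (ne_snd hq2.symm)
            (ne_fst (add_ne_sub ha x2 hf1.1 hf1.2 hf2.1 hf2.2))
            (ne_snd hq2.symm) (ne_snd hq2.symm)
        exact absurd h7 (by omega)
      · have hq1 : y1 + ((c3 : ℕ) : ZMod b) ≠ y1 := add_ne_self hb y1 hc3.1 (by omega)
        have hq2 : y1 + ((c3 : ℕ) : ZMod b) ≠ y2 := hv
        have h7 : 7 ≤ U.card :=
          seven_le_card h1 ha1 ha2 h2 hA1 hA2 hb1
            (ne_fst (add_ne_self ha x1 hc1.1 (by omega)).symm)
            (ne_fst (sub_ne_self ha x1 hc2.1 (by omega)).symm)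
            (ne_snd hy) (ne_snd hy) (ne_snd hy)
            (ne_snd hq1.symm)
            (ne_fst (add_ne_sub ha x1 hc1.1 hc1.2 hc2.1 hc2.2))
            (ne_snd hy) (ne_snd hy) (ne_snd hy)
            (ne_snd hq1.symm)
            (ne_snd hy) (ne_snd hy) (ne_snd hy)
            (ne_snd hq1.symm)
            (ne_fst (add_ne_self ha x2 hf1.1 (by omega)).symm)
            (ne_fst (sub_ne_self ha x2 hf2.1 (by omega)).symm)
            (ne_snd hq2.symm)
            (ne_fst (add_ne_sub ha x2 hf1.1 hf1.2 hf2.1 hf2.2))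
            (ne_snd hq2.symm) (ne_snd hq2.symm)
        exact absurd h7 (by omega)

lemma key (ha : 16 ≤ a) (hb : 16 ≤ b) {U W : Finset (ZMod a × ZMod b)}
    (hUcard : U.card = 6) (hWcard : W.card = 6) (hit : HitEq U W) : U = W := by
  by_contra hne
  have hd : ∃ d ∈ U, d ∉ W := by
    by_contra h
    push_neg at h
    exact hne (Finset.eq_of_subset_of_card_le (fun z hz => h z hz) (by omega))
  have he : ∃ e ∈ W, e ∉ U := by
    by_contra h
    push_neg at h
    exact hne (Finset.eq_of_subset_of_card_le (fun z hz => h z hz) (by omega)).symm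
  obtain ⟨⟨dx, dy⟩, hdU, hdW⟩ := hd
  obtain ⟨⟨ex, ey⟩, heW, heU⟩ := he
  obtain ⟨c1, c2, c3, c4, hc1, hc2, hc3, hc4, ha1, ha2, hb1, hb2⟩ := cross hit hdU hdW
  obtain ⟨f1, f2, f3, f4, hf1, hf2, hf3, hf4, hA1, hA2, hB1, hB2⟩ := cross hit.symm heW heU
  set S5 : Finset (ZMod a × ZMod b) :=
    {(dx, dy), (dx + ((c1 : ℕ) : ZMod a), dy), (dx - ((c2 : ℕ) : ZMod a), dy),
      (dx, dy + ((c3 : ℕ) : ZMod b)), (dx, dy - ((c4 : ℕ) : ZMod b))} with hS5def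
  have hS5sub : S5 ⊆ U := by
    intro z hz
    simp only [hS5def, Finset.mem_insert, Finset.mem_singleton] at hz
    rcases hz with rfl | rfl | rfl | rfl | rfl <;> assumption
  have hS5card : S5.card = 5 := by
    rw [hS5def,
      Finset.card_insert_of_notMem (by
        simp [ne_fst (add_ne_self ha dx hc1.1 (by omega)).symm,
          ne_fst (sub_ne_self ha dx hc2.1 (by omega)).symm,
          ne_snd (add_ne_self hb dy hc3.1 (by omega)).symm,
          ne_snd (sub_ne_self hb dy hc4.1 (by omega)).symm]),
      Finset.card_insert_of_notMem (by
        simp [ne_fst (add_ne_sub ha dx hc1.1 hc1.2 hc2.1 hc2.2),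
          ne_fst (add_ne_self ha dx hc1.1 (by omega)),
          ne_fst (add_ne_self ha dx hc1.1 (by omega))]),
      Finset.card_insert_of_notMem (by
        simp [ne_fst (sub_ne_self ha dx hc2.1 (by omega)),
          ne_fst (sub_ne_self ha dx hc2.1 (by omega))]),
      Finset.card_insert_of_notMem (by
        simp [ne_snd (add_ne_sub hb dy hc3.1 hc3.2 hc4.1 hc4.2)]),
      Finset.card_singleton]
  have hsd : (U \ S5).card = 1 := by
    rw [Finset.card_sdiff_of_subset hS5sub, hUcard, hS5card]
  obtain ⟨z, hzeq⟩ := Finset.card_eq_one.mp hsd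
  have hzU : z ∈ U := by
    have : z ∈ U \ S5 := hzeq ▸ Finset.mem_singleton_self z
    exact (Finset.mem_sdiff.mp this).1
  have hmem : ∀ u ∈ U, u = (dx, dy) ∨ u = (dx + ((c1 : ℕ) : ZMod a), dy) ∨
      u = (dx - ((c2 : ℕ) : ZMod a), dy) ∨ u = (dx, dy + ((c3 : ℕ) : ZMod b)) ∨
      u = (dx, dy - ((c4 : ℕ) : ZMod b)) ∨ u = z := by
    intro u hu
    by_cases h : u ∈ S5
    · simp only [hS5def, Finset.mem_insert, Finset.mem_singleton] at h
      tauto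
    · have : u ∈ U \ S5 := Finset.mem_sdiff.mpr ⟨hu, h⟩
      rw [hzeq] at this
      exact Or.inr (Or.inr (Or.inr (Or.inr (Or.inr (Finset.mem_singleton.mp this)))))
  have toU : ∀ p ∈ W, p ≠ (ex, ey) → p ∈ U := by
    intro p hp hpe
    by_contra hpu
    exact hpe (diff_subsingleton ha hb hWcard hit.symm p hp (ex, ey) heW hpu heU)
  have hA1U : (ex + ((f1 : ℕ) : ZMod a), ey) ∈ U :=
    toU _ hA1 (ne_fst (add_ne_self ha ex hf1.1 (by omega)))
  have hA2U : (ex - ((f2 : ℕ) : ZMod a), ey) ∈ U :=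
    toU _ hA2 (ne_fst (sub_ne_self ha ex hf2.1 (by omega)))
  have hB1U : (ex, ey + ((f3 : ℕ) : ZMod b)) ∈ U :=
    toU _ hB1 (ne_snd (add_ne_self hb ey hf3.1 (by omega)))
  have hB2U : (ex, ey - ((f4 : ℕ) : ZMod b)) ∈ U :=
    toU _ hB2 (ne_snd (sub_ne_self hb ey hf4.1 (by omega)))
  by_cases hy : ey = dy
  · by_cases hx : ex = dx
    · exact heU (by rw [hx, hy]; exact hdU)
    · have hz1 : (ex, ey + ((f3 : ℕ) : ZMod b)) = z := by
        rcases hmem _ hB1U with h | h | h | h | h | h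
        · exact absurd (Prod.ext_iff.mp h).1 hx
        · have h2 := (Prod.ext_iff.mp h).2
          rw [← hy] at h2
          exact absurd h2 (add_ne_self hb ey hf3.1 (by omega))
        · have h2 := (Prod.ext_iff.mp h).2
          rw [← hy] at h2
          exact absurd h2 (add_ne_self hb ey hf3.1 (by omega))
        · exact absurd (Prod.ext_iff.mp h).1 hx
        · exact absurd (Prod.ext_iff.mp h).1 hx
        · exact h
      have hz2 : (ex, ey - ((f4 : ℕ) : ZMod b)) = z := by
        rcases hmem _ hB2U with h | h | h | h | h | h
        · exact absurd (Prod.ext_iff.mp h).1 hx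
        · have h2 := (Prod.ext_iff.mp h).2
          rw [← hy] at h2
          exact absurd h2 (sub_ne_self hb ey hf4.1 (by omega))
        · have h2 := (Prod.ext_iff.mp h).2
          rw [← hy] at h2
          exact absurd h2 (sub_ne_self hb ey hf4.1 (by omega))
        · exact absurd (Prod.ext_iff.mp h).1 hx
        · exact absurd (Prod.ext_iff.mp h).1 hx
        · exact h
      exact absurd (Prod.ext_iff.mp (hz1.trans hz2.symm)).2
        (add_ne_sub hb ey hf3.1 hf3.2 hf4.1 hf4.2)
  · have hA1' : (ex + ((f1 : ℕ) : ZMod a), ey) = (dx, dy + ((c3 : ℕ) : ZMod b)) ∨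
        (ex + ((f1 : ℕ) : ZMod a), ey) = (dx, dy - ((c4 : ℕ) : ZMod b)) ∨
        (ex + ((f1 : ℕ) : ZMod a), ey) = z := by
      rcases hmem _ hA1U with h | h | h | h | h | h
      · exact absurd (Prod.ext_iff.mp h).2 hy
      · exact absurd (Prod.ext_iff.mp h).2 hy
      · exact absurd (Prod.ext_iff.mp h).2 hy
      · exact Or.inl h
      · exact Or.inr (Or.inl h)
      · exact Or.inr (Or.inr h)
    have hA2' : (ex - ((f2 : ℕ) : ZMod a), ey) = (dx, dy + ((c3 : ℕ) : ZMod b)) ∨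
        (ex - ((f2 : ℕ) : ZMod a), ey) = (dx, dy - ((c4 : ℕ) : ZMod b)) ∨
        (ex - ((f2 : ℕ) : ZMod a), ey) = z := by
      rcases hmem _ hA2U with h | h | h | h | h | h
      · exact absurd (Prod.ext_iff.mp h).2 hy
      · exact absurd (Prod.ext_iff.mp h).2 hy
      · exact absurd (Prod.ext_iff.mp h).2 hy
      · exact Or.inl h
      · exact Or.inr (Or.inl h)
      · exact Or.inr (Or.inr h)
    by_cases hx : ex = dx
    · have hz1 : (ex + ((f1 : ℕ) : ZMod a), ey) = z := by
        rcases hA1' with h | h | h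
        · have h1 := (Prod.ext_iff.mp h).1
          rw [← hx] at h1
          exact absurd h1 (add_ne_self ha ex hf1.1 (by omega))
        · have h1 := (Prod.ext_iff.mp h).1
          rw [← hx] at h1
          exact absurd h1 (add_ne_self ha ex hf1.1 (by omega))
        · exact h
      have hz2 : (ex - ((f2 : ℕ) : ZMod a), ey) = z := by
        rcases hA2' with h | h | h
        · have h1 := (Prod.ext_iff.mp h).1
          rw [← hx] at h1
          exact absurd h1 (sub_ne_self ha ex hf2.1 (by omega))
        · have h1 := (Prod.ext_iff.mp h).1
          rw [← hx] at h1
          exact absurd h1 (sub_ne_self ha ex hf2.1 (by omega))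
        · exact h
      exact absurd (Prod.ext_iff.mp (hz1.trans hz2.symm)).1
        (add_ne_sub ha ex hf1.1 hf1.2 hf2.1 hf2.2)
    · have hzrow : z.2 = ey ∧ z.1 ≠ ex := by
        rcases hA1' with h | h | h
        · rcases hA2' with h' | h' | h'
          · exact absurd (Prod.ext_iff.mp (h.trans h'.symm)).1
              (add_ne_sub ha ex hf1.1 hf1.2 hf2.1 hf2.2)
          · have s1 := (Prod.ext_iff.mp h).2
            have s2 := (Prod.ext_iff.mp h').2
            exact absurd (s1.symm.trans s2) (add_ne_sub hb dy hc3.1 hc3.2 hc4.1 hc4.2)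
          · exact ⟨by rw [← h'], by rw [← h']; exact sub_ne_self ha ex hf2.1 (by omega)⟩
        · rcases hA2' with h' | h' | h'
          · have s1 := (Prod.ext_iff.mp h).2
            have s2 := (Prod.ext_iff.mp h').2
            exact absurd (s2.symm.trans s1) (add_ne_sub hb dy hc3.1 hc3.2 hc4.1 hc4.2)
          · exact absurd (Prod.ext_iff.mp (h.trans h'.symm)).1
              (add_ne_sub ha ex hf1.1 hf1.2 hf2.1 hf2.2)
          · exact ⟨by rw [← h'], by rw [← h']; exact sub_ne_self ha ex hf2.1 (by omega)⟩
        · exact ⟨by rw [← h], by rw [← h]; exact add_ne_self ha ex hf1.1 (by omega)⟩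
      have hB1' : (ex, ey + ((f3 : ℕ) : ZMod b)) = (dx + ((c1 : ℕ) : ZMod a), dy) ∨
          (ex, ey + ((f3 : ℕ) : ZMod b)) = (dx - ((c2 : ℕ) : ZMod a), dy) := by
        rcases hmem _ hB1U with h | h | h | h | h | h
        · exact absurd (Prod.ext_iff.mp h).1 hx
        · exact Or.inl h
        · exact Or.inr h
        · exact absurd (Prod.ext_iff.mp h).1 hx
        · exact absurd (Prod.ext_iff.mp h).1 hx
        · exact absurd ((Prod.ext_iff.mp h).1).symm hzrow.2
      have hB2' : (ex, ey - ((f4 : ℕ) : ZMod b)) = (dx + ((c1 : ℕ) : ZMod a), dy) ∨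
          (ex, ey - ((f4 : ℕ) : ZMod b)) = (dx - ((c2 : ℕ) : ZMod a), dy) := by
        rcases hmem _ hB2U with h | h | h | h | h | h
        · exact absurd (Prod.ext_iff.mp h).1 hx
        · exact Or.inl h
        · exact Or.inr h
        · exact absurd (Prod.ext_iff.mp h).1 hx
        · exact absurd (Prod.ext_iff.mp h).1 hx
        · exact absurd ((Prod.ext_iff.mp h).1).symm hzrow.2
      rcases hB1' with h | h <;> rcases hB2' with h' | h'
      · exact absurd (Prod.ext_iff.mp (h.trans h'.symm)).2
          (add_ne_sub hb ey hf3.1 hf3.2 hf4.1 hf4.2)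
      · have s1 := (Prod.ext_iff.mp h).1
        have s2 := (Prod.ext_iff.mp h').1
        exact absurd (s1.symm.trans s2) (add_ne_sub ha dx hc1.1 hc1.2 hc2.1 hc2.2)
      · have s1 := (Prod.ext_iff.mp h).1
        have s2 := (Prod.ext_iff.mp h').1
        exact absurd (s2.symm.trans s1) (add_ne_sub ha dx hc1.1 hc1.2 hc2.1 hc2.2)
      · exact absurd (Prod.ext_iff.mp (h.trans h'.symm)).2
          (add_ne_sub hb ey hf3.1 hf3.2 hf4.1 hf4.2)

lemma exists_sep (ha : 16 ≤ a) (hb : 16 ≤ b) {U W : Finset (ZMod a × ZMod b)}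
    (hU : U.card = 6) (hW : W.card = 6) (hne : U ≠ W) :
    ∃ P : Finset (ZMod a × ZMod b), (∃ x y, P = Hp x y ∨ P = Vp x y) ∧
      (((P ∩ U).Nonempty ∧ P ∩ W = ∅) ∨ ((P ∩ W).Nonempty ∧ P ∩ U = ∅)) := by
  by_contra h
  push_neg at h
  apply hne
  apply key ha hb hU hW
  intro x y
  have hHmem : ∀ S : Finset (ZMod a × ZMod b),
      (Hp x y ∩ S).Nonempty ↔ ∃ i : Fin 6, (x + ((i : ℕ) : ZMod a), y) ∈ S := by
    intro S
    constructor
    · rintro ⟨p, hp⟩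
      rw [Finset.mem_inter] at hp
      obtain ⟨i, hi⟩ := mem_Hp.mp hp.1
      exact ⟨i, hi ▸ hp.2⟩
    · rintro ⟨i, hi⟩
      exact ⟨(x + ((i : ℕ) : ZMod a), y), Finset.mem_inter.mpr ⟨mem_Hp.mpr ⟨i, rfl⟩, hi⟩⟩
  have hVmem : ∀ S : Finset (ZMod a × ZMod b),
      (Vp x y ∩ S).Nonempty ↔ ∃ j : Fin 6, (x, y + ((j : ℕ) : ZMod b)) ∈ S := by
    intro S
    constructor
    · rintro ⟨p, hp⟩
      rw [Finset.mem_inter] at hp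
      obtain ⟨j, hj⟩ := mem_Vp.mp hp.1
      exact ⟨j, hj ▸ hp.2⟩
    · rintro ⟨j, hj⟩
      exact ⟨(x, y + ((j : ℕ) : ZMod b)), Finset.mem_inter.mpr ⟨mem_Vp.mpr ⟨j, rfl⟩, hj⟩⟩
  have h1 := h (Hp x y) ⟨x, y, Or.inl rfl⟩
  have h2 := h (Vp x y) ⟨x, y, Or.inr rfl⟩
  constructor
  · constructor
    · intro hex
      exact (hHmem W).mp (h1.1 ((hHmem U).mpr hex))
    · intro hex
      exact (hHmem U).mp (h1.2 ((hHmem W).mpr hex))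
  · constructor
    · intro hex
      exact (hVmem W).mp (h2.1 ((hVmem U).mpr hex))
    · intro hex
      exact (hVmem U).mp (h2.2 ((hVmem W).mpr hex))

end KneserTorus

/-- For `a, b ≥ 16` and `n = ab`, the collection of all straight paths with 6
vertices in the toroidal grid `C_a □ C_b` is a resolving set for the Kneser graph
`K(n,6)` on the ground set `(ℤ/aℤ) × (ℤ/bℤ)`; consequently `β(K(n,6)) ≤ 2n`. -/
theorem toroidal_grid_resolving_kneser_6 (a b : ℕ) (ha : 16 ≤ a) (hb : 16 ≤ b) :
    resolvingSet (kneserGraphOn (ZMod a × ZMod b) 6)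
      {X | ∃ (x : ZMod a) (y : ZMod b),
        X.1 = Finset.image (fun i : Fin 6 => (x + (i : ℕ), y)) Finset.univ ∨
        X.1 = Finset.image (fun j : Fin 6 => (x, y + (j : ℕ))) Finset.univ} ∧
    metricDim (kneserGraphOn (ZMod a × ZMod b) 6) ≤ 2 * (a * b) := by
  classical
  haveI : NeZero a := ⟨by omega⟩
  haveI : NeZero b := ⟨by omega⟩
  have hres : resolvingSet (kneserGraphOn (ZMod a × ZMod b) 6)
      {X | ∃ (x : ZMod a) (y : ZMod b),
        X.1 = Finset.image (fun i : Fin 6 => (x + (i : ℕ), y)) Finset.univ ∨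
        X.1 = Finset.image (fun j : Fin 6 => (x, y + (j : ℕ))) Finset.univ} := by
    intro U V hUV
    obtain ⟨P, ⟨x, y, hP⟩, hsep⟩ :=
      KneserTorus.exists_sep ha hb U.2 V.2 (fun h => hUV (Subtype.ext h))
    have hPcard : P.card = 6 := by
      rcases hP with h | h
      · rw [h]; exact KneserTorus.card_Hp ha x y
      · rw [h]; exact KneserTorus.card_Vp hb x y
    refine ⟨⟨P, hPcard⟩, ⟨x, y, hP⟩, ?_⟩
    rcases hsep with ⟨hne, hemp⟩ | ⟨hne, hemp⟩
    · have hVP : (kneserGraphOn (ZMod a × ZMod b) 6).Adj V ⟨P, hPcard⟩ := by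
        constructor
        · intro hEq
          have hv : V.1 = P := congrArg Subtype.val hEq
          rw [← hv, Finset.inter_self] at hemp
          rw [hemp] at hv
          rw [← hv] at hPcard
          simp at hPcard
        · rw [Finset.disjoint_iff_inter_eq_empty, Finset.inter_comm]
          exact hemp
      have h1 : (kneserGraphOn (ZMod a × ZMod b) 6).dist V ⟨P, hPcard⟩ = 1 :=
        SimpleGraph.dist_eq_one_iff_adj.mpr hVP
      rw [h1]
      intro hcon
      have hadj := (SimpleGraph.dist_eq_one_iff_adj.mp hcon).2
      rw [Finset.disjoint_iff_inter_eq_empty, Finset.inter_comm] at hadj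
      exact hne.ne_empty hadj
    · have hUP : (kneserGraphOn (ZMod a × ZMod b) 6).Adj U ⟨P, hPcard⟩ := by
        constructor
        · intro hEq
          have hv : U.1 = P := congrArg Subtype.val hEq
          rw [← hv, Finset.inter_self] at hemp
          rw [hemp] at hv
          rw [← hv] at hPcard
          simp at hPcard
        · rw [Finset.disjoint_iff_inter_eq_empty, Finset.inter_comm]
          exact hemp
      have h1 : (kneserGraphOn (ZMod a × ZMod b) 6).dist U ⟨P, hPcard⟩ = 1 :=
        SimpleGraph.dist_eq_one_iff_adj.mpr hUP
      rw [h1]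
      intro hcon
      have hadj := (SimpleGraph.dist_eq_one_iff_adj.mp hcon.symm).2
      rw [Finset.disjoint_iff_inter_eq_empty, Finset.inter_comm] at hadj
      exact hne.ne_empty hadj
  refine ⟨hres, ?_⟩
  have hfin : ({X : {s : Finset (ZMod a × ZMod b) // s.card = 6} | ∃ (x : ZMod a) (y : ZMod b),
      X.1 = Finset.image (fun i : Fin 6 => (x + (i : ℕ), y)) Finset.univ ∨
      X.1 = Finset.image (fun j : Fin 6 => (x, y + (j : ℕ))) Finset.univ}).Finite :=
    Set.toFinite _
  have hmono : metricDim (kneserGraphOn (ZMod a × ZMod b) 6) ≤ hfin.toFinset.card := by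
    unfold metricDim
    exact Nat.sInf_le ⟨hfin.toFinset, by rw [Set.Finite.coe_toFinset]; exact hres, rfl⟩
  refine le_trans hmono ?_
  have hsub : hfin.toFinset ⊆ Finset.image (fun q : (ZMod a × ZMod b) × Bool =>
      if q.2 then
        (⟨KneserTorus.Hp q.1.1 q.1.2, KneserTorus.card_Hp ha q.1.1 q.1.2⟩ :
          {s : Finset (ZMod a × ZMod b) // s.card = 6})
      else ⟨KneserTorus.Vp q.1.1 q.1.2, KneserTorus.card_Vp hb q.1.1 q.1.2⟩)
      Finset.univ := by
    intro X hX
    rw [Set.Finite.mem_toFinset] at hX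
    obtain ⟨x, y, hX⟩ := hX
    rcases hX with h | h
    · refine Finset.mem_image.mpr ⟨((x, y), true), Finset.mem_univ _, ?_⟩
      simp only [if_pos]
      exact Subtype.ext h.symm
    · refine Finset.mem_image.mpr ⟨((x, y), false), Finset.mem_univ _, ?_⟩
      simp only [Bool.false_eq_true, if_false]
      exact Subtype.ext h.symm
  calc hfin.toFinset.card ≤ _ := Finset.card_le_card hsub
    _ ≤ (Finset.univ : Finset ((ZMod a × ZMod b) × Bool)).card := Finset.card_image_le
    _ = 2 * (a * b) := by
        rw [Finset.card_univ, Fintype.card_prod, Fintype.card_prod, ZMod.card, ZMod.card,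
          Fintype.card_bool]
        ring
end
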